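/- arXiv:1408.1029 — 2 statements merged into one kernel-verified Lean document; each statement's English description precedes it below -/
import Mathlib

section
/- For every dimension d ≥ 1 there exists a closed set A ⊆ ℝ^d with dimH A = 0 such that for every m ≥ 1 and every family f₁, …, f_m of bijective affine maps from ℝ^d to ℝ^d, the intersection ⋂_{i=1}^m f_i(A) is nonempty. -/
open Set Metric MeasureTheory
open scoped NNReal ENNReal
set_option synthInstance.maxHeartbeats 1000000
set_option maxHeartbeats 1000000

namespace S16

noncomputable section

variable (d : ℕ)

abbrev E := EuclideanSpace ℝ (Fin d)

/-! ### coordinate helpers -/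

lemma coord_le_norm (x : E d) (l : Fin d) : |x l| ≤ ‖x‖ := by
  rw [EuclideanSpace.norm_eq]
  have h1 : |x l| = Real.sqrt (‖x l‖ ^ 2) := by
    rw [Real.sqrt_sq_eq_abs]; simp [Real.norm_eq_abs]
  rw [h1]
  apply Real.sqrt_le_sqrt
  exact Finset.single_le_sum (f := fun i => ‖x i‖ ^ 2)
    (fun i _ => sq_nonneg _) (Finset.mem_univ l)

lemma norm_le_coord (x : E d) {C : ℝ} (hC : 0 ≤ C) (h : ∀ l, |x l| ≤ C) :
    ‖x‖ ≤ Real.sqrt d * C := by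
  rw [EuclideanSpace.norm_eq]
  have : ∑ i, ‖x i‖ ^ 2 ≤ (d : ℝ) * C ^ 2 := by
    calc ∑ i, ‖x i‖ ^ 2 ≤ ∑ _i : Fin d, C ^ 2 := by
          apply Finset.sum_le_sum
          intro i _
          have := h i
          rw [Real.norm_eq_abs]
          nlinarith [abs_nonneg (x i)]
      _ = (d : ℝ) * C ^ 2 := by simp [mul_comm]
  calc Real.sqrt (∑ i, ‖x i‖ ^ 2) ≤ Real.sqrt ((d:ℝ) * C ^ 2) := Real.sqrt_le_sqrt this
    _ = Real.sqrt d * C := by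
        rw [Real.sqrt_mul (by positivity), Real.sqrt_sq hC]

/-! ### scales -/

def c0 : ℕ := d + 9

def aseq : ℕ → ℕ
  | 0 => c0 d
  | k + 1 => (k + 1) * aseq k + 2 * c0 d

def bseq (k : ℕ) : ℕ := (k + 1) * aseq d k + c0 d

lemma aseq_zero : aseq d 0 = d + 9 := rfl

lemma aseq_succ (k : ℕ) : aseq d (k+1) = bseq d k + c0 d := by
  simp [aseq, bseq]; ring

lemma aseq_ge (k : ℕ) : k + c0 d ≤ aseq d k := by
  induction k with
  | zero => simp [aseq]
  | succ n ih =>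
      have h1 : 1 ≤ aseq d n := le_trans (by unfold c0; omega) ih
      calc n + 1 + c0 d ≤ (n+1) * aseq d n + 2 * c0 d := by nlinarith
        _ = aseq d (n+1) := by simp [aseq]

lemma aseq_ge_k (k : ℕ) : k ≤ aseq d k := le_trans (Nat.le_add_right _ _) (aseq_ge d k)

lemma aseq_ge_d (k : ℕ) : d ≤ aseq d k := by
  have h1 := aseq_ge d k
  have h2 : c0 d = d + 9 := rfl
  omega

lemma aseq_pos (k : ℕ) : 1 ≤ aseq d k := by
  have h1 := aseq_ge d k
  have h2 : c0 d = d + 9 := rfl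
  omega

lemma bseq_ge (k : ℕ) : aseq d k + 1 ≤ bseq d k := by
  have h1 : 1 ≤ aseq d k := aseq_pos d k
  have h2 : 1 ≤ c0 d := by unfold c0; omega
  calc aseq d k + 1 ≤ (k+1) * aseq d k + c0 d := by nlinarith
    _ = bseq d k := rfl

lemma bseq_succ_ge (k : ℕ) : bseq d k + 1 ≤ bseq d (k+1) := by
  have h1 : bseq d k + c0 d = aseq d (k+1) := (aseq_succ d k).symm
  have h2 := bseq_ge d (k+1)
  have h3 : 1 ≤ c0 d := by unfold c0; omega
  omega

def sc (k : ℕ) : ℝ := ((2:ℝ) ^ aseq d k)⁻¹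
def wd (k : ℕ) : ℝ := ((2:ℝ) ^ bseq d k)⁻¹

def rad : ℕ → ℝ
  | 0 => 4⁻¹
  | k + 1 => wd d k / 4

def ρ : ℝ := ((16:ℝ) * (d + 1))⁻¹

lemma sc_pos (k : ℕ) : 0 < sc d k := by unfold sc; positivity
lemma wd_pos (k : ℕ) : 0 < wd d k := by unfold wd; positivity
lemma rad_pos (k : ℕ) : 0 < rad d k := by
  cases k with
  | zero => norm_num [rad]
  | succ n => simp only [rad]; have := wd_pos d n; linarith

lemma ρ_pos : 0 < ρ d := by unfold ρ; positivity

lemma ρ_le : ρ d ≤ 16⁻¹ := by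
  unfold ρ
  rw [inv_le_inv₀ (by positivity) (by norm_num)]
  nlinarith [Nat.cast_nonneg (α := ℝ) d]

lemma pow_le_pow_two {i j : ℕ} (h : i ≤ j) : (2:ℝ) ^ i ≤ (2:ℝ) ^ j :=
  pow_le_pow_right₀ one_le_two h

lemma wd_le_sc (k : ℕ) : wd d k ≤ sc d k := by
  unfold wd sc
  rw [inv_le_inv₀ (by positivity) (by positivity)]
  exact pow_le_pow_two (le_trans (Nat.le_succ _) (bseq_ge d k))

lemma sqrt_d_le : Real.sqrt d ≤ (2:ℝ) ^ d := by
  have h0 : (1:ℝ) ≤ (2:ℝ)^d := one_le_pow₀ one_le_two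
  have hd2 : (d:ℝ) ≤ (2:ℝ)^d := by exact_mod_cast (@Nat.lt_two_pow_self d).le
  have h1 : (d:ℝ) ≤ ((2:ℝ) ^ d) ^ 2 := by nlinarith
  calc Real.sqrt d ≤ Real.sqrt (((2:ℝ)^d)^2) := Real.sqrt_le_sqrt h1
    _ = (2:ℝ)^d := Real.sqrt_sq (by positivity)

lemma sqrt_d_nonneg : 0 ≤ Real.sqrt d := Real.sqrt_nonneg _

lemma sc_succ (k : ℕ) : sc d (k+1) = wd d k * ((2:ℝ) ^ c0 d)⁻¹ := by
  unfold sc wd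
  rw [aseq_succ, pow_add, mul_inv]

lemma four_sqrt_c0 : 4 * Real.sqrt d * ((2:ℝ) ^ c0 d)⁻¹ ≤ 4⁻¹ := by
  unfold c0
  rw [pow_add, mul_inv, ← mul_assoc]
  have h2 : (0:ℝ) < (2:ℝ)^d := by positivity
  have h3 : 4 * Real.sqrt d * ((2:ℝ)^d)⁻¹ ≤ 4 := by
    rw [mul_assoc]
    have : Real.sqrt d * ((2:ℝ)^d)⁻¹ ≤ 1 := by
      rw [mul_inv_le_iff₀ h2]; simpa using sqrt_d_le d
    nlinarith [sqrt_d_nonneg d, inv_nonneg.2 h2.le]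
  calc 4 * Real.sqrt d * ((2:ℝ)^d)⁻¹ * ((2:ℝ)^9)⁻¹ ≤ 4 * ((2:ℝ)^9)⁻¹ :=
        mul_le_mul_of_nonneg_right h3 (by positivity)
    _ ≤ 4⁻¹ := by norm_num

lemma sc0_le : sc d 0 ≤ 8⁻¹ := by
  unfold sc
  rw [inv_le_inv₀ (by positivity) (by norm_num)]
  calc (8:ℝ) = 2^3 := by norm_num
    _ ≤ 2 ^ aseq d 0 := pow_le_pow_two (by rw [aseq_zero]; omega)

/-- `4 √d * s_k ≤ rad k` -/
lemma key1 (k : ℕ) : 4 * Real.sqrt d * sc d k ≤ rad d k := by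
  cases k with
  | zero =>
      show 4 * Real.sqrt d * sc d 0 ≤ 4⁻¹
      have : sc d 0 = ((2:ℝ) ^ c0 d)⁻¹ := rfl
      rw [this]
      exact four_sqrt_c0 d
  | succ n =>
      show 4 * Real.sqrt d * sc d (n+1) ≤ wd d n / 4
      rw [sc_succ]
      have hw := wd_pos d n
      calc 4 * Real.sqrt d * (wd d n * ((2:ℝ) ^ c0 d)⁻¹)
            = (4 * Real.sqrt d * ((2:ℝ) ^ c0 d)⁻¹) * wd d n := by ring
        _ ≤ 4⁻¹ * wd d n := mul_le_mul_of_nonneg_right (four_sqrt_c0 d) hw.le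
        _ = wd d n / 4 := by ring

lemma wd_succ_le (k : ℕ) : wd d (k+1) ≤ wd d k / 2 := by
  unfold wd
  have h1 : ((2:ℝ) ^ (bseq d k + 1))⁻¹ = ((2:ℝ)^bseq d k)⁻¹ / 2 := by
    rw [pow_add]; field_simp
  rw [← h1, inv_le_inv₀ (by positivity) (by positivity)]
  exact pow_le_pow_two (bseq_succ_ge d k)

lemma wd0_le : wd d 0 ≤ 8⁻¹ := le_trans (wd_le_sc d 0) (sc0_le d)

/-- `rad (k+1) ≤ rad k / 2` -/
lemma key2 (k : ℕ) : rad d (k+1) ≤ rad d k / 2 := by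
  cases k with
  | zero =>
      show wd d 0 / 4 ≤ 4⁻¹ / 2
      have := wd0_le d
      linarith
  | succ n =>
      show wd d (n+1) / 4 ≤ wd d n / 4 / 2
      have := wd_succ_le d n
      linarith

lemma bseq_succ_ge2 (k : ℕ) : bseq d k + 2 ≤ bseq d (k+1) := by
  have h1 : bseq d k + c0 d = aseq d (k+1) := (aseq_succ d k).symm
  have h2 := bseq_ge d (k+1)
  have h3 : 2 ≤ c0 d := by unfold c0; omega
  omega

lemma wd_succ_le4 (k : ℕ) : wd d (k+1) ≤ wd d k / 4 := by
  unfold wd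
  have h1 : ((2:ℝ) ^ (bseq d k + 2))⁻¹ = ((2:ℝ)^bseq d k)⁻¹ / 4 := by
    rw [pow_add]; norm_num; ring
  rw [← h1, inv_le_inv₀ (by positivity) (by positivity)]
  exact pow_le_pow_two (bseq_succ_ge2 d k)

/-- `wd k ≤ rad k` -/
lemma wd_le_rad (k : ℕ) : wd d k ≤ rad d k := by
  cases k with
  | zero => have := wd0_le d; show wd d 0 ≤ 4⁻¹; linarith
  | succ n => exact wd_succ_le4 d n

/-! ### grid sets -/

def gridR (sv wv : ℝ) : Set ℝ := ⋃ z : ℤ, Icc ((z:ℝ) * sv) ((z:ℝ) * sv + wv)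

def grid (sv wv : ℝ) : Set (E d) := {y | ∀ l, y l ∈ gridR sv wv}

def cube : Set (E d) := {y | ∀ l, y l ∈ Icc (0:ℝ) 1}

def CC (m i : ℕ) : Set (E d) :=
  cube d ∩ ⋂ k ∈ {k : ℕ | k % m = i}, grid d (sc d k) (wd d k)

lemma isClosed_gridR {sv wv : ℝ} (hs : 0 < sv) : IsClosed (gridR sv wv) := by
  apply LocallyFinite.isClosed_iUnion
  · intro x
    refine ⟨Metric.ball x 1, Metric.ball_mem_nhds x one_pos, ?_⟩
    have hsub : {z : ℤ | (Icc ((z:ℝ) * sv) ((z:ℝ) * sv + wv) ∩ Metric.ball x 1).Nonempty}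
        ⊆ {z : ℤ | (z:ℝ) ∈ Icc ((x - 1 - wv)/sv) ((x+1)/sv)} := by
      rintro z ⟨y, ⟨hy1, hy2⟩, hy3⟩
      simp only [Metric.mem_ball, Real.dist_eq] at hy3
      have h1 : x - 1 < y := by cases abs_lt.1 hy3; linarith
      have h2 : y < x + 1 := by cases abs_lt.1 hy3; linarith
      constructor
      · rw [div_le_iff₀ hs]; nlinarith
      · rw [le_div_iff₀ hs]; nlinarith
    apply Set.Finite.subset _ hsub
    have : {z : ℤ | (z:ℝ) ∈ Icc ((x - 1 - wv)/sv) ((x+1)/sv)} ⊆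
        Set.Icc ⌈(x - 1 - wv)/sv⌉ ⌊(x+1)/sv⌋ := by
      rintro z ⟨h1, h2⟩
      exact ⟨Int.ceil_le.2 h1, Int.le_floor.2 h2⟩
    exact (Set.finite_Icc _ _).subset this
  · intro z
    exact isClosed_Icc

lemma isClosed_grid {sv wv : ℝ} (hs : 0 < sv) : IsClosed (grid d sv wv) := by
  have : grid d sv wv = ⋂ l : Fin d, (EuclideanSpace.proj l) ⁻¹' (gridR sv wv) := by
    ext y; simp [grid, Set.mem_iInter, EuclideanSpace.proj]
  rw [this]
  exact isClosed_iInter fun l =>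
    (isClosed_gridR hs).preimage (EuclideanSpace.proj l).continuous

lemma isClosed_cube : IsClosed (cube d) := by
  have : cube d = ⋂ l : Fin d, (EuclideanSpace.proj l) ⁻¹' (Icc (0:ℝ) 1) := by
    ext y; simp [cube, Set.mem_iInter, EuclideanSpace.proj]
  rw [this]
  exact isClosed_iInter fun l => isClosed_Icc.preimage (EuclideanSpace.proj l).continuous

lemma isClosed_CC (m i : ℕ) : IsClosed (CC d m i) := by
  apply (isClosed_cube d).inter
  exact isClosed_biInter fun k _ => isClosed_grid d (sc_pos d k)

lemma cube_norm_le {y : E d} (hy : y ∈ cube d) : ‖y‖ ≤ Real.sqrt d := by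
  have h := norm_le_coord d y (C := 1) zero_le_one (fun l => by
    have := hy l
    rw [abs_le]
    exact ⟨by linarith [this.1], this.2⟩)
  simpa using h

lemma isCompact_CC (m i : ℕ) : IsCompact (CC d m i) := by
  apply IsCompact.of_isClosed_subset (isCompact_closedBall (0 : E d) (Real.sqrt d))
    (isClosed_CC d m i)
  intro y hy
  simp only [Metric.mem_closedBall, dist_zero_right]
  exact cube_norm_le d hy.1

/-! ### The basic Cantor-type construction -/

section Prim

variable {d : ℕ}

/-- center of a grid cell of scale `k` near the point `z` -/
def cellCtr (k : ℕ) (z : E d) : E d :=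
  WithLp.toLp 2 (fun l => sc d k * (⌊z l / sc d k⌋ : ℤ) + wd d k / 2)

lemma cellCtr_apply (k : ℕ) (z : E d) (l : Fin d) :
    cellCtr k z l = sc d k * (⌊z l / sc d k⌋ : ℤ) + wd d k / 2 := rfl

lemma cellCtr_close (k : ℕ) (z : E d) : ‖cellCtr k z - z‖ ≤ Real.sqrt d * sc d k := by
  apply norm_le_coord d _ (sc_pos d k).le
  intro l
  have happ : (cellCtr k z - z) l = cellCtr k z l - z l := by simp
  rw [happ, cellCtr_apply]
  have hs := sc_pos d k
  have hw := wd_pos d k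
  have hwle := wd_le_sc d k
  have h1 : sc d k * (⌊z l / sc d k⌋ : ℤ) ≤ z l := by
    rw [mul_comm, ← le_div_iff₀ hs]
    exact Int.floor_le _
  have h2 : z l < sc d k * ((⌊z l / sc d k⌋ : ℤ) + 1) := by
    rw [mul_comm, ← div_lt_iff₀ hs]
    have := Int.lt_floor_add_one (z l / sc d k)
    push_cast
    linarith
  rw [abs_le]
  constructor <;> nlinarith

variable (M : ℕ → (E d →L[ℝ] E d)) (t : ℕ → E d)

/-- the recursively defined centers of the nested balls -/
def ctr : ℕ → E d
  | 0 => WithLp.toLp 2 (fun _ => (2:ℝ)⁻¹)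
  | k + 1 => Ring.inverse (M k)
      (cellCtr k (M k (ctr k) + t k) - t k)

variable {M t}

section
variable (hM : ∀ k, ‖M k - 1‖ ≤ ρ d)

include hM

lemma M_isUnit (k : ℕ) : IsUnit (M k) := by
  have h : ‖1 - M k‖ < 1 := by
    rw [norm_sub_rev]
    exact lt_of_le_of_lt (hM k) (lt_of_le_of_lt (ρ_le d) (by norm_num))
  simpa [sub_sub_cancel] using isUnit_one_sub_of_norm_lt_one h

lemma M_apply_inverse (k : ℕ) (v : E d) : (M k) (Ring.inverse (M k) v) = v := by
  have h := Ring.mul_inverse_cancel (M k) (M_isUnit hM k)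
  calc (M k) (Ring.inverse (M k) v) = ((M k) * Ring.inverse (M k)) v := rfl
    _ = (1 : E d →L[ℝ] E d) v := by rw [h]
    _ = v := rfl

lemma norm_le_two_mul_M (k : ℕ) (v : E d) : ‖v‖ ≤ 2 * ‖M k v‖ := by
  have h1 : ‖v - M k v‖ ≤ ρ d * ‖v‖ := by
    have : v - M k v = (1 - M k) v := by simp
    rw [this]
    calc ‖(1 - M k) v‖ ≤ ‖1 - M k‖ * ‖v‖ := ContinuousLinearMap.le_opNorm _ _
      _ ≤ ρ d * ‖v‖ := by
          apply mul_le_mul_of_nonneg_right _ (norm_nonneg v)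
          rw [norm_sub_rev]; exact hM k
  have h2 : ‖v‖ - ‖M k v‖ ≤ ρ d * ‖v‖ := le_trans (norm_sub_norm_le _ _) h1
  have h3 : ρ d ≤ 16⁻¹ := ρ_le d
  nlinarith [norm_nonneg v, norm_nonneg (M k v), ρ_pos d]

lemma M_le (k : ℕ) (v : E d) : ‖M k v‖ ≤ 2 * ‖v‖ := by
  calc ‖M k v‖ = ‖v + (M k - 1) v‖ := by simp
    _ ≤ ‖v‖ + ‖(M k - 1) v‖ := norm_add_le _ _
    _ ≤ ‖v‖ + ρ d * ‖v‖ := by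
        gcongr
        calc ‖(M k - 1) v‖ ≤ ‖M k - 1‖ * ‖v‖ := ContinuousLinearMap.le_opNorm _ _
          _ ≤ ρ d * ‖v‖ := mul_le_mul_of_nonneg_right (hM k) (norm_nonneg v)
    _ ≤ 2 * ‖v‖ := by nlinarith [norm_nonneg v, ρ_le d, ρ_pos d]

lemma ctr_image (k : ℕ) :
    M k (ctr M t (k+1)) + t k = cellCtr k (M k (ctr M t k) + t k) := by
  have : ctr M t (k+1) = Ring.inverse (M k)
      (cellCtr k (M k (ctr M t k) + t k) - t k) := rfl
  rw [this, M_apply_inverse hM]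
  abel

lemma ctr_step (k : ℕ) :
    ‖ctr M t (k+1) - ctr M t k‖ ≤ 2 * (Real.sqrt d * sc d k) := by
  have h1 : M k (ctr M t (k+1) - ctr M t k)
      = cellCtr k (M k (ctr M t k) + t k) - (M k (ctr M t k) + t k) := by
    rw [map_sub]
    have := ctr_image (t := t) hM k
    have h2 : M k (ctr M t (k+1)) = cellCtr k (M k (ctr M t k) + t k) - t k := by
      rw [← this]; abel
    rw [h2]; abel
  calc ‖ctr M t (k+1) - ctr M t k‖ ≤ 2 * ‖M k (ctr M t (k+1) - ctr M t k)‖ :=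
        norm_le_two_mul_M hM k _
    _ ≤ 2 * (Real.sqrt d * sc d k) := by
        rw [h1]
        have := cellCtr_close k (M k (ctr M t k) + t k)
        linarith [cellCtr_close k (M k (ctr M t k) + t k)]

lemma ball_nested (k : ℕ) :
    closedBall (ctr M t (k+1)) (rad d (k+1)) ⊆ closedBall (ctr M t k) (rad d k) := by
  intro y hy
  simp only [Metric.mem_closedBall] at hy ⊢
  have h1 := ctr_step (t := t) hM k
  have h2 : dist y (ctr M t k) ≤ rad d (k+1) + 2 * (Real.sqrt d * sc d k) := by
    calc dist y (ctr M t k) ≤ dist y (ctr M t (k+1)) + dist (ctr M t (k+1)) (ctr M t k) :=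
          dist_triangle _ _ _
      _ ≤ rad d (k+1) + 2 * (Real.sqrt d * sc d k) := by
          apply add_le_add hy
          rw [dist_eq_norm]; exact h1
  have h3 := key1 d k
  have h4 := key2 d k
  have h5 := sc_pos d k
  have h6 := sqrt_d_nonneg d
  nlinarith

lemma ball_grid (k : ℕ) (y : E d) (hy : y ∈ closedBall (ctr M t (k+1)) (rad d (k+1))) :
    M k y + t k ∈ grid d (sc d k) (wd d k) := by
  intro l
  refine Set.mem_iUnion.2 ⟨⌊(M k (ctr M t k) + t k) l / sc d k⌋, ?_⟩
  have hc2 : M k (ctr M t (k+1)) = cellCtr k (M k (ctr M t k) + t k) - t k := by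
    have := ctr_image (t := t) hM k
    rw [← this]; abel
  set c := cellCtr k (M k (ctr M t k) + t k) with hc
  have hyc : ‖(M k y + t k) - c‖ ≤ wd d k / 2 := by
    have h1 : (M k y + t k) - c = M k (y - ctr M t (k+1)) := by
      rw [map_sub, hc2]
      abel
    rw [h1]
    simp only [Metric.mem_closedBall, dist_eq_norm] at hy
    calc ‖M k (y - ctr M t (k+1))‖ ≤ 2 * ‖y - ctr M t (k+1)‖ := M_le hM k _
      _ ≤ 2 * rad d (k+1) := by linarith
      _ = wd d k / 2 := by show 2 * (wd d k / 4) = wd d k / 2; ring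
  have hl : |(M k y + t k) l - c l| ≤ wd d k / 2 := by
    have : (M k y + t k) l - c l = ((M k y + t k) - c) l := by simp
    rw [this]
    exact le_trans (coord_le_norm d _ l) hyc
  have hcl : c l = sc d k * (⌊(M k (ctr M t k) + t k) l / sc d k⌋ : ℤ) + wd d k / 2 := rfl
  rw [abs_le] at hl
  constructor
  · rw [mul_comm]; linarith [hl.1, hcl ▸ hl.1]
  · have := hl.2
    rw [hcl] at this
    rw [mul_comm]
    linarith

end

lemma ball_cube (hM : ∀ k, ‖M k - 1‖ ≤ ρ d) (ht : ∀ k, ‖t k‖ ≤ ρ d)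
    (k : ℕ) (y : E d) (hy : y ∈ closedBall (ctr M t 0) (rad d 0)) :
    M k y + t k ∈ cube d := by
  have hq : ∀ l, ctr M t 0 l = (2:ℝ)⁻¹ := fun l => rfl
  have hqnorm : ‖ctr M t 0‖ ≤ Real.sqrt d * (2:ℝ)⁻¹ := by
    apply norm_le_coord d _ (by norm_num)
    intro l; rw [hq l]; rw [abs_of_nonneg] <;> norm_num
  simp only [Metric.mem_closedBall, dist_eq_norm] at hy
  have hrad : rad d 0 = 4⁻¹ := rfl
  rw [hrad] at hy
  have hsd : Real.sqrt d ≤ (d:ℝ) + 1 := by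
    have hcd : (0:ℝ) ≤ (d:ℝ) := Nat.cast_nonneg d
    have h1 : (d:ℝ) ≤ ((d:ℝ)+1)^2 := by nlinarith
    calc Real.sqrt d ≤ Real.sqrt (((d:ℝ)+1)^2) := Real.sqrt_le_sqrt h1
      _ = (d:ℝ)+1 := Real.sqrt_sq (by positivity)
  have hynorm : ‖y‖ ≤ ((d:ℝ)+1) * 2⁻¹ + 4⁻¹ := by
    have h0 : ‖y‖ ≤ ‖y - ctr M t 0‖ + ‖ctr M t 0‖ := by
      simpa using norm_add_le (y - ctr M t 0) (ctr M t 0)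
    have := hqnorm
    nlinarith [sqrt_d_nonneg d]
  intro l
  have hdev : |((M k - 1) y + t k) l| ≤ 8⁻¹ := by
    have h1 : ‖(M k - 1) y + t k‖ ≤ ρ d * ‖y‖ + ρ d := by
      calc ‖(M k - 1) y + t k‖ ≤ ‖(M k - 1) y‖ + ‖t k‖ := norm_add_le _ _
        _ ≤ ‖M k - 1‖ * ‖y‖ + ρ d := add_le_add (ContinuousLinearMap.le_opNorm _ _) (ht k)
        _ ≤ ρ d * ‖y‖ + ρ d := by
            have := mul_le_mul_of_nonneg_right (hM k) (norm_nonneg y)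
            linarith
    have h2 : ρ d * ‖y‖ + ρ d ≤ 8⁻¹ := by
      have hρ : ρ d = ((16:ℝ) * ((d:ℝ) + 1))⁻¹ := rfl
      have hpos : (0:ℝ) < 16 * ((d:ℝ)+1) := by positivity
      have hρ2 : ρ d * (16 * ((d:ℝ)+1)) = 1 := by
        rw [hρ]; field_simp
      have hcd : (0:ℝ) ≤ (d:ℝ) := Nat.cast_nonneg d
      have hρpos := ρ_pos d
      -- ρ * (‖y‖ + 1) ≤ ρ * ((d+1)/2 + 4⁻¹ + 1) ≤ ρ * 2 * (d+1) = 8⁻¹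
      have h3 : ‖y‖ + 1 ≤ 2 * ((d:ℝ)+1) := by nlinarith
      nlinarith [norm_nonneg y]
    exact le_trans (le_trans (coord_le_norm d _ l) h1) h2
  have hyl : |y l - 2⁻¹| ≤ 4⁻¹ := by
    have : y l - 2⁻¹ = (y - ctr M t 0) l := by simp [hq]
    rw [this]
    exact le_trans (coord_le_norm d _ l) hy
  have happ : (M k y + t k) l = y l + ((M k - 1) y + t k) l := by simp; ring
  rw [happ]
  rw [abs_le] at hdev hyl
  constructor
  · simp only; linarith [hdev.1, hyl.1]
  · simp only; linarith [hdev.2, hyl.2]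

theorem prim0 (M : ℕ → (E d →L[ℝ] E d)) (t : ℕ → E d)
    (hM : ∀ k, ‖M k - 1‖ ≤ ρ d) (ht : ∀ k, ‖t k‖ ≤ ρ d) :
    ∃ u : E d, ∀ k, M k u + t k ∈ cube d ∧ M k u + t k ∈ grid d (sc d k) (wd d k) := by
  have hne : (⋂ k, closedBall (ctr M t k) (rad d k)).Nonempty := by
    apply IsCompact.nonempty_iInter_of_sequence_nonempty_isCompact_isClosed
    · exact fun k => ball_nested hM k
    · exact fun k => ⟨ctr M t k, mem_closedBall_self (rad_pos d k).le⟩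
    · exact isCompact_closedBall _ _
    · exact fun k => Metric.isClosed_closedBall
  obtain ⟨u, hu⟩ := hne
  rw [Set.mem_iInter] at hu
  exact ⟨u, fun k => ⟨ball_cube hM ht k u (hu 0), ball_grid hM k u (hu (k+1))⟩⟩

theorem prim (m : ℕ) (hm : 0 < m) (M : Fin m → (E d →L[ℝ] E d)) (t : Fin m → E d)
    (hM : ∀ i, ‖M i - 1‖ ≤ ρ d) (ht : ∀ i, ‖t i‖ ≤ ρ d) :
    ∃ u : E d, ∀ i : Fin m, M i u + t i ∈ CC d m i.val := by
  obtain ⟨u, hu⟩ := prim0 (fun k => M ⟨k % m, Nat.mod_lt _ hm⟩)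
    (fun k => t ⟨k % m, Nat.mod_lt _ hm⟩) (fun k => hM _) (fun k => ht _)
  refine ⟨u, fun i => ⟨?_, ?_⟩⟩
  · have h := (hu i.val).1
    have hieq : (⟨i.val % m, Nat.mod_lt _ hm⟩ : Fin m) = i :=
      Fin.ext (Nat.mod_eq_of_lt i.isLt)
    rwa [hieq] at h
  · rw [Set.mem_iInter₂]
    intro k hk
    have hk' : k % m = i.val := hk
    have h := (hu k).2
    have hieq : (⟨k % m, Nat.mod_lt _ hm⟩ : Fin m) = i := Fin.ext hk'
    rwa [hieq] at h

end Prim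

/-! ### Hausdorff dimension of the Cantor sets -/

section Dim

variable {d : ℕ}

def cell (k : ℕ) (z : Fin d → ℤ) : Set (E d) :=
  {y | ∀ l, y l ∈ Icc ((z l : ℝ) * sc d k) ((z l : ℝ) * sc d k + wd d k)}

lemma cell_diam (k : ℕ) (z : Fin d → ℤ) :
    EMetric.diam (cell (d := d) k z) ≤ ENNReal.ofReal (Real.sqrt d * wd d k) := by
  apply EMetric.diam_le
  intro x hx y hy
  rw [edist_dist]
  apply ENNReal.ofReal_le_ofReal
  rw [dist_eq_norm]
  apply norm_le_coord d _ (wd_pos d k).le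
  intro l
  have h1 := hx l
  have h2 := hy l
  have : (x - y) l = x l - y l := by simp
  rw [this, abs_le]
  constructor
  · linarith [h1.1, h2.2]
  · linarith [h1.2, h2.1]

lemma CC_subset_cells (m i k : ℕ) (hk : k % m = i) :
    CC d m i ⊆ ⋃ z : (Fin d → ↥(Finset.Icc (-1 : ℤ) ((2:ℤ)^(aseq d k)))),
      cell k (fun l => (z l : ℤ)) := by
  intro y hy
  obtain ⟨hyc, hyg⟩ := hy
  have hygk : y ∈ grid d (sc d k) (wd d k) := by
    have := Set.mem_iInter₂.1 hyg k hk
    exact this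
  have hs := sc_pos d k
  have hw := wd_pos d k
  have hsc : sc d k * (2:ℝ)^(aseq d k) = 1 := by
    unfold sc
    rw [inv_mul_cancel₀ (by positivity)]
  have h : ∀ l : Fin d, ∃ zi : ℤ, zi ∈ Finset.Icc (-1 : ℤ) ((2:ℤ)^(aseq d k)) ∧
      y l ∈ Icc ((zi:ℝ) * sc d k) ((zi:ℝ) * sc d k + wd d k) := by
    intro l
    obtain ⟨zi, hzi⟩ := Set.mem_iUnion.1 (hygk l)
    refine ⟨zi, Finset.mem_Icc.2 ⟨?_, ?_⟩, hzi⟩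
    · -- -1 ≤ zi
      have h0 : (0:ℝ) ≤ y l := (hyc l).1
      have h1 : y l ≤ (zi:ℝ) * sc d k + wd d k := hzi.2
      have hwle := wd_le_sc d k
      have : (-1:ℝ) ≤ (zi:ℝ) := by
        nlinarith
      exact_mod_cast this
    · -- zi ≤ 2^a
      have h1 : (zi:ℝ) * sc d k ≤ y l := hzi.1
      have h2 : y l ≤ 1 := (hyc l).2
      have : (zi:ℝ) ≤ (2:ℝ)^(aseq d k) := by
        nlinarith
      have hcast : ((2:ℤ)^(aseq d k) : ℝ) = (2:ℝ)^(aseq d k) := by push_cast; ring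
      rw [← hcast] at this
      exact_mod_cast this
  choose zf hz1 hz2 using h
  exact Set.mem_iUnion.2 ⟨fun l => ⟨zf l, hz1 l⟩, fun l => hz2 l⟩

lemma card_cells (k : ℕ) :
    (Fintype.card (Fin d → ↥(Finset.Icc (-1 : ℤ) ((2:ℤ)^(aseq d k))))) =
      (2^(aseq d k) + 2)^d := by
  rw [Fintype.card_fun]
  congr 1
  · rw [Fintype.card_coe, Int.card_Icc]
    have : ((2:ℤ)^(aseq d k)) + 1 - (-1) = ((2^(aseq d k) + 2 : ℕ) : ℤ) := by
      push_cast; ring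
    rw [this, Int.toNat_natCast]
  · exact Fintype.card_fin d

lemma arith_exp (hd : 1 ≤ d) {tt : ℝ} (htt : 0 < tt) {n N₀ k : ℕ}
    (hN : 3 * (d:ℝ) ≤ (N₀:ℝ) * tt) (hN1 : 1 ≤ N₀) (hk : n + N₀ ≤ k) :
    ((aseq d k : ℝ) + 2) * d + d * tt + n ≤ (bseq d k : ℝ) * tt := by
  have hA_d : (d:ℝ) ≤ (aseq d k : ℝ) := by exact_mod_cast aseq_ge_d d k
  have hA_k : (k:ℝ) ≤ (aseq d k : ℝ) := by exact_mod_cast aseq_ge_k d k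
  have hk_n : (n:ℝ) + 1 ≤ (k:ℝ) := by
    have : n + 1 ≤ k := le_trans (by omega) hk
    exact_mod_cast this
  have hk_N : (N₀:ℝ) ≤ (k:ℝ) := by
    have : N₀ ≤ k := by omega
    exact_mod_cast this
  have hd' : (1:ℝ) ≤ (d:ℝ) := by exact_mod_cast hd
  have hB : (bseq d k : ℝ) = ((k:ℝ)+1) * (aseq d k : ℝ) + (c0 d : ℝ) := by
    unfold bseq; push_cast; ring
  have hc0 : (0:ℝ) ≤ (c0 d : ℝ) := Nat.cast_nonneg _
  have hktt : 3 * (d:ℝ) ≤ (k:ℝ) * tt := by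
    calc 3 * (d:ℝ) ≤ (N₀:ℝ) * tt := hN
      _ ≤ (k:ℝ) * tt := mul_le_mul_of_nonneg_right hk_N htt.le
  set A := (aseq d k : ℝ) with hA
  have hApos : (0:ℝ) ≤ A := le_trans (by linarith) hA_d
  have h1 : 3 * (d:ℝ) * A ≤ ((k:ℝ) * tt) * A := mul_le_mul_of_nonneg_right hktt hApos
  have h2 : (d:ℝ) * tt ≤ A * tt := mul_le_mul_of_nonneg_right hA_d htt.le
  -- n ≤ 2d(A-1)
  have h3 : (n:ℝ) ≤ 2 * (d:ℝ) * (A - 1) := by nlinarith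
  have h4 : (bseq d k : ℝ) * tt ≥ (k:ℝ) * A * tt + A * tt := by
    rw [hB]
    nlinarith
  nlinarith

lemma real_bound (hd : 1 ≤ d) {tt : ℝ} (htt : 0 < tt) {n N₀ k : ℕ}
    (hN : 3 * (d:ℝ) ≤ (N₀:ℝ) * tt) (hN1 : 1 ≤ N₀) (hk : n + N₀ ≤ k) :
    ((2^(aseq d k) + 2 : ℕ) : ℝ)^d * (Real.sqrt d * wd d k)^tt ≤ (2⁻¹)^n := by
  have h2 : (0:ℝ) < 2 := two_pos
  set A := aseq d k with hA
  set B := bseq d k with hB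
  have hw := wd_pos d k
  have hsd0 : (0:ℝ) ≤ Real.sqrt d := Real.sqrt_nonneg _
  -- card bound
  have hc1 : ((2^A + 2 : ℕ) : ℝ) ≤ (2:ℝ)^(A+2) := by
    push_cast
    have : (1:ℝ) ≤ 2^A := one_le_pow₀ one_le_two
    rw [pow_add]; nlinarith
  have hc2 : ((2^A + 2 : ℕ) : ℝ)^d ≤ ((2:ℝ)^(A+2))^d :=
    pow_le_pow_left₀ (Nat.cast_nonneg _) hc1 d
  -- second factor bound
  have hm1 : (Real.sqrt d * wd d k)^tt ≤ ((2:ℝ)^d * wd d k)^tt :=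
    Real.rpow_le_rpow (by positivity)
      (mul_le_mul_of_nonneg_right (sqrt_d_le d) hw.le) htt.le
  -- convert to rpow of 2
  have e1 : ((2:ℝ)^(A+2))^d = (2:ℝ)^((((A+2)*d : ℕ)):ℝ) := by
    rw [← pow_mul, Real.rpow_natCast]
  have e2 : ((2:ℝ)^d * wd d k)^tt = (2:ℝ)^((((d:ℝ)) - (B:ℝ)) * tt) := by
    unfold wd
    rw [← hB]
    rw [← Real.rpow_natCast 2 d, ← Real.rpow_natCast 2 B, ← Real.rpow_neg h2.le,
      ← Real.rpow_add h2, ← Real.rpow_mul h2.le]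
    ring_nf
  have e3 : ((2:ℝ)⁻¹)^n = (2:ℝ)^(-(n:ℝ)) := by
    rw [inv_pow, ← Real.rpow_natCast 2 n, ← Real.rpow_neg h2.le]
  -- exponent inequality
  have hexp : ((((A+2)*d : ℕ)):ℝ) + ((d:ℝ) - (B:ℝ)) * tt ≤ -(n:ℝ) := by
    have := arith_exp hd htt hN hN1 hk
    rw [← hA, ← hB] at this
    push_cast
    nlinarith
  calc ((2^A + 2 : ℕ) : ℝ)^d * (Real.sqrt d * wd d k)^tt
      ≤ ((2:ℝ)^(A+2))^d * ((2:ℝ)^d * wd d k)^tt := by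
        apply mul_le_mul hc2 hm1 (Real.rpow_nonneg (by positivity) tt) (by positivity)
    _ = (2:ℝ)^((((A+2)*d : ℕ)):ℝ) * (2:ℝ)^(((d:ℝ) - (B:ℝ)) * tt) := by rw [e1, e2]
    _ = (2:ℝ)^(((((A+2)*d : ℕ)):ℝ) + ((d:ℝ) - (B:ℝ)) * tt) := (Real.rpow_add h2 _ _).symm
    _ ≤ (2:ℝ)^(-(n:ℝ)) := Real.rpow_le_rpow_of_exponent_le one_le_two hexp
    _ = ((2:ℝ)⁻¹)^n := e3.symm

lemma muH_CC (hd : 1 ≤ d) {m i : ℕ} (hi : i < m) (tt : ℝ≥0) (htt : 0 < tt) :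
    μH[(tt:ℝ)] (CC d m i) = 0 := by
  have hm : 0 < m := lt_of_le_of_lt (Nat.zero_le i) hi
  have httR : (0:ℝ) < (tt:ℝ) := htt
  set N₀ : ℕ := max 1 (Nat.ceil ((3*(d:ℝ))/(tt:ℝ))) with hN₀def
  have hN1 : 1 ≤ N₀ := le_max_left _ _
  have hN : 3 * (d:ℝ) ≤ (N₀:ℝ) * tt := by
    have h1 : (3*(d:ℝ))/(tt:ℝ) ≤ (N₀:ℝ) := by
      calc (3*(d:ℝ))/(tt:ℝ) ≤ (Nat.ceil ((3*(d:ℝ))/(tt:ℝ)) : ℝ) := Nat.le_ceil _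
        _ ≤ (N₀:ℝ) := by
            have h9 : Nat.ceil ((3*(d:ℝ))/(tt:ℝ)) ≤ N₀ := le_max_right _ _
            exact_mod_cast h9
    calc 3 * (d:ℝ) = (3*(d:ℝ))/(tt:ℝ) * tt := by field_simp
      _ ≤ (N₀:ℝ) * tt := mul_le_mul_of_nonneg_right h1 httR.le
  set kf : ℕ → ℕ := fun n => i + m * (n + N₀) with hkf
  have hkmod : ∀ n, kf n % m = i := by
    intro n
    simp only [hkf]
    rw [Nat.add_mul_mod_self_left, Nat.mod_eq_of_lt hi]
  have hkge : ∀ n, n + N₀ ≤ kf n := by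
    intro n
    simp only [hkf]
    calc n + N₀ ≤ m * (n + N₀) := Nat.le_mul_of_pos_left _ hm
      _ ≤ i + m * (n + N₀) := Nat.le_add_left _ _
  have hkgen : ∀ n, n ≤ kf n := fun n => le_trans (by omega) (hkge n)
  -- the covering
  set rr : ℕ → ℝ≥0∞ := fun n => ENNReal.ofReal (Real.sqrt d * wd d (kf n)) with hrr
  have hwdle : ∀ n, wd d (kf n) ≤ (2⁻¹:ℝ)^n := by
    intro n
    have h1 : n ≤ bseq d (kf n) :=
      le_trans (hkgen n) (le_trans (aseq_ge_k d (kf n)) (le_trans (Nat.le_succ _) (bseq_ge d (kf n))))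
    unfold wd
    rw [inv_pow]
    rw [inv_le_inv₀ (by positivity) (by positivity)]
    exact pow_le_pow_two h1
  have hr : Filter.Tendsto rr Filter.atTop (nhds 0) := by
    have hub : ∀ n, rr n ≤ ENNReal.ofReal (Real.sqrt d * (2⁻¹:ℝ)^n) := by
      intro n
      apply ENNReal.ofReal_le_ofReal
      exact mul_le_mul_of_nonneg_left (hwdle n) (Real.sqrt_nonneg _)
    have hub_tendsto : Filter.Tendsto (fun n => ENNReal.ofReal (Real.sqrt d * (2⁻¹:ℝ)^n))
        Filter.atTop (nhds 0) := by
      have : Filter.Tendsto (fun n : ℕ => Real.sqrt d * (2⁻¹:ℝ)^n) Filter.atTop (nhds 0) := by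
        have h := tendsto_pow_atTop_nhds_zero_of_lt_one (by norm_num : (0:ℝ) ≤ 2⁻¹)
          (by norm_num : (2⁻¹:ℝ) < 1)
        simpa using h.const_mul (Real.sqrt d)
      have := ENNReal.tendsto_ofReal this
      simpa using this
    exact tendsto_of_tendsto_of_tendsto_of_le_of_le tendsto_const_nhds hub_tendsto
      (fun n => zero_le ..) hub
  have hcover := Measure.hausdorffMeasure_le_liminf_sum (tt:ℝ) (CC d m i) rr hr
    (fun n (z : Fin d → ↥(Finset.Icc (-1 : ℤ) ((2:ℤ)^(aseq d (kf n))))) =>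
      cell (kf n) (fun l => (z l : ℤ)))
    (Filter.Eventually.of_forall (fun n z => cell_diam (kf n) _))
    (Filter.Eventually.of_forall (fun n => CC_subset_cells m i (kf n) (hkmod n)))
  apply le_antisymm _ (zero_le ..)
  refine le_trans hcover ?_
  have hsum : ∀ n, (∑ z : (Fin d → ↥(Finset.Icc (-1 : ℤ) ((2:ℤ)^(aseq d (kf n))))),
      EMetric.diam (cell (kf n) (fun l => (z l : ℤ))) ^ (tt:ℝ)) ≤
      ENNReal.ofReal ((2⁻¹:ℝ)^n) := by
    intro n
    have hterm : ∀ z : (Fin d → ↥(Finset.Icc (-1 : ℤ) ((2:ℤ)^(aseq d (kf n))))),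
        EMetric.diam (cell (kf n) (fun l => (z l : ℤ))) ^ (tt:ℝ) ≤
        (ENNReal.ofReal (Real.sqrt d * wd d (kf n))) ^ (tt:ℝ) := by
      intro z
      exact ENNReal.rpow_le_rpow (cell_diam (kf n) _) httR.le
    calc (∑ z : (Fin d → ↥(Finset.Icc (-1 : ℤ) ((2:ℤ)^(aseq d (kf n))))),
        EMetric.diam (cell (kf n) (fun l => (z l : ℤ))) ^ (tt:ℝ))
        ≤ (Finset.univ.card : ℕ) •
            (ENNReal.ofReal (Real.sqrt d * wd d (kf n))) ^ (tt:ℝ) :=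
          Finset.sum_le_card_nsmul _ _ _ (fun z _ => hterm z)
      _ = ((2^(aseq d (kf n)) + 2)^d : ℕ) *
            (ENNReal.ofReal (Real.sqrt d * wd d (kf n))) ^ (tt:ℝ) := by
          rw [nsmul_eq_mul, Finset.card_univ, card_cells]
      _ ≤ ENNReal.ofReal ((2⁻¹:ℝ)^n) := by
          have hx : (0:ℝ) < Real.sqrt d * wd d (kf n) := by
            apply mul_pos _ (wd_pos d (kf n))
            apply Real.sqrt_pos.2
            exact_mod_cast lt_of_lt_of_le one_pos hd
          rw [ENNReal.ofReal_rpow_of_pos hx]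
          have hcast : (((2^(aseq d (kf n)) + 2)^d : ℕ) : ℝ≥0∞) =
              ENNReal.ofReal (((2^(aseq d (kf n)) + 2)^d : ℕ) : ℝ) := by
            rw [ENNReal.ofReal_natCast]
          rw [hcast, ← ENNReal.ofReal_mul (Nat.cast_nonneg _)]
          apply ENNReal.ofReal_le_ofReal
          have := real_bound hd httR hN hN1 (hkge n)
          calc (((2^(aseq d (kf n)) + 2)^d : ℕ) : ℝ) * (Real.sqrt d * wd d (kf n))^(tt:ℝ)
              = (((2^(aseq d (kf n)) + 2) : ℕ) : ℝ)^d * (Real.sqrt d * wd d (kf n))^(tt:ℝ) := by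
                push_cast; ring
            _ ≤ (2⁻¹:ℝ)^n := this
  calc Filter.liminf (fun n => ∑ z : (Fin d → ↥(Finset.Icc (-1 : ℤ) ((2:ℤ)^(aseq d (kf n))))),
        EMetric.diam (cell (kf n) (fun l => (z l : ℤ))) ^ (tt:ℝ)) Filter.atTop
      ≤ Filter.liminf (fun n => ENNReal.ofReal ((2⁻¹:ℝ)^n)) Filter.atTop :=
        Filter.liminf_le_liminf (Filter.Eventually.of_forall hsum)
    _ = 0 := by
        apply Filter.Tendsto.liminf_eq
        have h := tendsto_pow_atTop_nhds_zero_of_lt_one (by norm_num : (0:ℝ) ≤ 2⁻¹)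
          (by norm_num : (2⁻¹:ℝ) < 1)
        have := ENNReal.tendsto_ofReal h
        simpa using this

theorem dimH_CC (hd : 1 ≤ d) {m i : ℕ} (hi : i < m) : dimH (CC d m i) = 0 := by
  apply le_antisymm _ (zero_le ..)
  by_contra hpos
  rw [not_le] at hpos
  obtain ⟨tt, htt0, httlt⟩ := ENNReal.lt_iff_exists_nnreal_btwn.1 hpos
  have h1 : μH[(tt:ℝ)] (CC d m i) = ∞ := hausdorffMeasure_of_lt_dimH httlt
  have h2 : μH[(tt:ℝ)] (CC d m i) = 0 := muH_CC hd hi tt (by exact_mod_cast htt0)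
  rw [h1] at h2
  exact ENNReal.top_ne_zero h2

end Dim

/-! ### Global assembly -/

section Glob

variable (d : ℕ)

abbrev PS (m : ℕ) := Fin m → ((E d →L[ℝ] E d) × E d)

lemma DsetEx (m : ℕ) : ∃ s : Set (PS d m), s.Countable ∧ Dense s :=
  TopologicalSpace.exists_countable_dense _

def Dset (m : ℕ) : Set (PS d m) := (DsetEx d m).choose

lemma Dset_countable (m : ℕ) : (Dset d m).Countable := (DsetEx d m).choose_spec.1
lemma Dset_dense (m : ℕ) : Dense (Dset d m) := (DsetEx d m).choose_spec.2

def Lam := (m : ℕ) × ↥(Dset d m)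

instance : Countable (Lam d) := by
  haveI : ∀ m, Countable ↥(Dset d m) := fun m => (Dset_countable d m).to_subtype
  exact inferInstanceAs (Countable ((m : ℕ) × ↥(Dset d m)))

instance : Nonempty (Lam d) := by
  obtain ⟨x, hx⟩ := (Dset_dense d 0).nonempty
  exact ⟨⟨0, ⟨x, hx⟩⟩⟩

def ee : ℕ → Lam d := (exists_surjective_nat (Lam d)).choose

lemma ee_surj : Function.Surjective (ee d) := (exists_surjective_nat (Lam d)).choose_spec

def NN (l : Lam d) (i : Fin l.1) : E d →L[ℝ] E d := ((l.2 : PS d l.1) i).1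
def tvec (l : Lam d) (i : Fin l.1) : E d := ((l.2 : PS d l.1) i).2

def validL (l : Lam d) : Prop := ∀ i : Fin l.1, IsUnit (NN d l i)

def κv : ℝ := (2 * (Real.sqrt d + 1))⁻¹

lemma κv_pos : 0 < κv d := by
  unfold κv
  have := sqrt_d_nonneg d
  positivity

lemma κv_le_half : κv d ≤ 2⁻¹ := by
  unfold κv
  have := sqrt_d_nonneg d
  rw [inv_le_inv₀ (by positivity) (by norm_num)]
  linarith

lemma κv_sqrt : κv d * Real.sqrt d ≤ 2⁻¹ := by
  unfold κv
  have h0 := sqrt_d_nonneg d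
  rw [inv_mul_le_iff₀ (by positivity)]
  nlinarith

def Qs (l : Lam d) : ℝ := ∑ i : Fin l.1, (‖NN d l i‖ + ‖tvec d l i‖)

lemma Qs_nonneg (l : Lam d) : 0 ≤ Qs d l :=
  Finset.sum_nonneg fun i _ => add_nonneg (norm_nonneg _) (norm_nonneg _)

lemma Qs_term_le (l : Lam d) (i : Fin l.1) : ‖NN d l i‖ + ‖tvec d l i‖ ≤ Qs d l :=
  Finset.single_le_sum (f := fun i => ‖NN d l i‖ + ‖tvec d l i‖)
    (fun j _ => add_nonneg (norm_nonneg _) (norm_nonneg _)) (Finset.mem_univ i)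

lemma apply_ring_inverse {N : E d →L[ℝ] E d} (h : IsUnit N) (v : E d) :
    N (Ring.inverse N v) = v := by
  have hmul := Ring.mul_inverse_cancel N h
  calc N (Ring.inverse N v) = (N * Ring.inverse N) v := rfl
    _ = (1 : E d →L[ℝ] E d) v := by rw [hmul]
    _ = v := rfl

lemma ring_inverse_apply {N : E d →L[ℝ] E d} (h : IsUnit N) (v : E d) :
    Ring.inverse N (N v) = v := by
  have hmul := Ring.inverse_mul_cancel N h
  calc Ring.inverse N (N v) = (Ring.inverse N * N) v := rfl
    _ = (1 : E d →L[ℝ] E d) v := by rw [hmul]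
    _ = v := rfl

lemma norm_isUnit_pos (hd : 1 ≤ d) {N : E d →L[ℝ] E d} (h : IsUnit N) : 0 < ‖N‖ := by
  haveI : Nonempty (Fin d) := ⟨⟨0, hd⟩⟩
  rcases (norm_nonneg N).lt_or_eq with h1 | h1
  · exact h1
  · exfalso
    have hN0 : N = 0 := by
      rwa [eq_comm, norm_eq_zero] at h1
    have h1 : (1 : E d →L[ℝ] E d) ≠ 0 := by
      intro hcon
      have happ : (1 : E d →L[ℝ] E d) (EuclideanSpace.single (⟨0, hd⟩ : Fin d) 1) =
          (0 : E d →L[ℝ] E d) (EuclideanSpace.single (⟨0, hd⟩ : Fin d) 1) := by rw [hcon]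
      simp only [ContinuousLinearMap.one_apply, ContinuousLinearMap.zero_apply] at happ
      have := congrArg (fun y : E d => y ⟨0, hd⟩) happ
      simp [EuclideanSpace.single_apply] at this
    obtain ⟨un, hun⟩ := h
    have := Ring.mul_inverse_cancel N ⟨un, hun⟩
    rw [hN0, zero_mul] at this
    exact h1 this.symm

lemma exists_v (hd : 1 ≤ d) (n : ℕ) (l : Lam d) : ∃ v : E d,
    ∀ (i : Fin l.1), IsUnit (NN d l i) → ∀ c ∈ cube d,
      (n:ℝ) ≤ ‖Ring.inverse (NN d l i) ((κv d * (1 + ‖v‖)) • c + v - tvec d l i)‖ := by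
  set R : ℝ := 1 + 2*((n:ℝ)+1)*(1 + Qs d l) with hR
  have hQ := Qs_nonneg d l
  have hRpos : 0 < R := by positivity
  refine ⟨EuclideanSpace.single (⟨0, hd⟩ : Fin d) R, ?_⟩
  intro i hu c hc
  set v : E d := EuclideanSpace.single (⟨0, hd⟩ : Fin d) R with hv
  have hvnorm : ‖v‖ = R := by
    rw [hv, EuclideanSpace.norm_single, Real.norm_eq_abs, abs_of_pos hRpos]
  set r : ℝ := κv d * (1 + ‖v‖) with hr
  have hrpos : 0 < r := by
    rw [hr]
    have := κv_pos d
    nlinarith [norm_nonneg v]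
  set z : E d := r • c + v - tvec d l i with hz
  set x : E d := Ring.inverse (NN d l i) z with hx
  have hNx : NN d l i x = z := apply_ring_inverse d hu z
  have hNpos := norm_isUnit_pos d hd hu
  have hQi := Qs_term_le d l i
  have hcnorm : ‖c‖ ≤ Real.sqrt d := cube_norm_le d hc
  have hrc : ‖r • c‖ ≤ (1 + ‖v‖) * 2⁻¹ := by
    rw [norm_smul, Real.norm_eq_abs, abs_of_pos hrpos, hr]
    have h1 : κv d * ‖c‖ ≤ 2⁻¹ := by
      calc κv d * ‖c‖ ≤ κv d * Real.sqrt d :=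
            mul_le_mul_of_nonneg_left hcnorm (κv_pos d).le
        _ ≤ 2⁻¹ := κv_sqrt d
    calc κv d * (1 + ‖v‖) * ‖c‖ = (κv d * ‖c‖) * (1 + ‖v‖) := by ring
      _ ≤ 2⁻¹ * (1 + ‖v‖) := by
          apply mul_le_mul_of_nonneg_right h1
          nlinarith [norm_nonneg v]
      _ = (1 + ‖v‖) * 2⁻¹ := by ring
  have hzlb : (n:ℝ) * ‖NN d l i‖ + 1 ≤ ‖z‖ := by
    have h1 : ‖z‖ ≥ ‖v‖ - ‖r • c‖ - ‖tvec d l i‖ := by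
      have h2 : v = z - r • c + tvec d l i := by rw [hz]; abel
      have h2a : ‖v‖ ≤ ‖z - r • c‖ + ‖tvec d l i‖ := by
        rw [h2]; exact norm_add_le _ _
      have h2b : ‖z - r • c‖ ≤ ‖z‖ + ‖r • c‖ := norm_sub_le _ _
      linarith
    have h3 : ‖v‖ - (1 + ‖v‖) * 2⁻¹ = (‖v‖ - 1) * 2⁻¹ := by ring
    have h4 : (‖v‖ - 1) * 2⁻¹ = ((n:ℝ)+1)*(1 + Qs d l) := by
      rw [hvnorm, hR]; ring
    have h5 : ((n:ℝ)+1)*(1 + Qs d l) ≥ (n:ℝ) * ‖NN d l i‖ + ‖tvec d l i‖ + 1 := by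
      have hn0 : (0:ℝ) ≤ (n:ℝ) := Nat.cast_nonneg n
      have hN0 : (0:ℝ) ≤ ‖NN d l i‖ := norm_nonneg _
      have ht0 : (0:ℝ) ≤ ‖tvec d l i‖ := norm_nonneg _
      nlinarith
    nlinarith
  have hub : ‖z‖ ≤ ‖NN d l i‖ * ‖x‖ := by
    rw [← hNx]
    exact ContinuousLinearMap.le_opNorm _ _
  nlinarith [norm_nonneg x]

variable (hd : 1 ≤ d)

def vv (n : ℕ) (l : Lam d) : E d := (exists_v d hd n l).choose

def rr' (n : ℕ) (l : Lam d) : ℝ := κv d * (1 + ‖vv d hd n l‖)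

lemma rr'_pos (n : ℕ) (l : Lam d) : 0 < rr' d hd n l := by
  unfold rr'
  have := κv_pos d
  nlinarith [norm_nonneg (vv d hd n l)]

def pmap (n : ℕ) (l : Lam d) (i : Fin l.1) : E d → E d :=
  fun y => Ring.inverse (NN d l i) (rr' d hd n l • y + vv d hd n l - tvec d l i)

lemma vv_spec (n : ℕ) (l : Lam d) (i : Fin l.1) (hu : IsUnit (NN d l i))
    (c : E d) (hc : c ∈ cube d) : (n:ℝ) ≤ ‖pmap d hd n l i c‖ :=
  (exists_v d hd n l).choose_spec i hu c hc

open Classical in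
def pieceFor (n : ℕ) (l : Lam d) : Set (E d) :=
  if validL d l then ⋃ i : Fin l.1, pmap d hd n l i '' CC d l.1 i.val else ∅

lemma pieceFor_far (n : ℕ) (l : Lam d) (x : E d) (hx : x ∈ pieceFor d hd n l) :
    (n:ℝ) ≤ ‖x‖ := by
  unfold pieceFor at hx
  split_ifs at hx with hval
  · obtain ⟨i, c, hcmem, rfl⟩ := Set.mem_iUnion.1 hx
    exact vv_spec d hd n l i (hval i) c hcmem.1
  · exact absurd hx (Set.notMem_empty x)

lemma pmap_continuous (n : ℕ) (l : Lam d) (i : Fin l.1) : Continuous (pmap d hd n l i) := by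
  unfold pmap
  exact (Ring.inverse (NN d l i)).continuous.comp
    (((continuous_const_smul (rr' d hd n l)).add continuous_const).sub continuous_const)

lemma pieceFor_closed (n : ℕ) (l : Lam d) : IsClosed (pieceFor d hd n l) := by
  unfold pieceFor
  split_ifs with hval
  · exact isClosed_iUnion_of_finite fun i =>
      ((isCompact_CC d l.1 i.val).image (pmap_continuous d hd n l i)).isClosed
  · exact isClosed_empty

lemma pmap_lipschitz (n : ℕ) (l : Lam d) (i : Fin l.1) :
    LipschitzWith (‖Ring.inverse (NN d l i)‖₊ * (rr' d hd n l).toNNReal)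
      (pmap d hd n l i) := by
  apply LipschitzWith.of_dist_le_mul
  intro y y'
  have hdiff : pmap d hd n l i y - pmap d hd n l i y' =
      Ring.inverse (NN d l i) (rr' d hd n l • (y - y')) := by
    unfold pmap
    rw [← map_sub]
    congr 1
    rw [smul_sub]
    abel
  rw [dist_eq_norm, hdiff]
  have h1 : ‖Ring.inverse (NN d l i) (rr' d hd n l • (y - y'))‖ ≤
      ‖Ring.inverse (NN d l i)‖ * (rr' d hd n l * ‖y - y'‖) := by
    calc ‖Ring.inverse (NN d l i) (rr' d hd n l • (y - y'))‖
        ≤ ‖Ring.inverse (NN d l i)‖ * ‖rr' d hd n l • (y - y')‖ :=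
          ContinuousLinearMap.le_opNorm _ _
      _ = ‖Ring.inverse (NN d l i)‖ * (rr' d hd n l * ‖y - y'‖) := by
          rw [norm_smul, Real.norm_eq_abs, abs_of_pos (rr'_pos d hd n l)]
  calc ‖Ring.inverse (NN d l i) (rr' d hd n l • (y - y'))‖
      ≤ ‖Ring.inverse (NN d l i)‖ * (rr' d hd n l * ‖y - y'‖) := h1
    _ = (‖Ring.inverse (NN d l i)‖₊ * (rr' d hd n l).toNNReal : ℝ≥0) * dist y y' := by
        rw [dist_eq_norm]
        push_cast
        rw [Real.coe_toNNReal _ (rr'_pos d hd n l).le]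
        ring

def KK : Set (E d) := ⋃ n, pieceFor d hd n (ee d n)

lemma KK_closed : IsClosed (KK d hd) := by
  apply LocallyFinite.isClosed_iUnion
  · intro x
    refine ⟨Metric.ball x 1, Metric.ball_mem_nhds x one_pos, ?_⟩
    apply Set.Finite.subset (Set.finite_Iic (⌊‖x‖ + 1⌋₊))
    rintro n ⟨y, hy1, hy2⟩
    have h1 : (n:ℝ) ≤ ‖y‖ := pieceFor_far d hd n (ee d n) y hy1
    have h2 : ‖y‖ < ‖x‖ + 1 := by
      have := mem_ball_iff_norm.1 hy2
      calc ‖y‖ ≤ ‖y - x‖ + ‖x‖ := by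
            simpa using norm_add_le (y - x) x
        _ < 1 + ‖x‖ := by linarith
        _ = ‖x‖ + 1 := by ring
    exact Set.mem_Iic.2 (Nat.le_floor (by linarith))
  · exact fun n => pieceFor_closed d hd n (ee d n)

lemma KK_dimH : dimH (KK d hd) = 0 := by
  apply le_antisymm _ (zero_le ..)
  unfold KK
  rw [dimH_iUnion]
  apply iSup_le
  intro n
  unfold pieceFor
  split_ifs with hval
  · rw [dimH_iUnion]
    apply iSup_le
    intro i
    calc dimH (pmap d hd n (ee d n) i '' CC d (ee d n).1 i.val)
        ≤ dimH (CC d (ee d n).1 i.val) := (pmap_lipschitz d hd n (ee d n) i).dimH_image_le _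
      _ = 0 := dimH_CC hd i.isLt
      _ ≤ 0 := le_refl _
  · rw [dimH_empty]

theorem KK_inter (m : ℕ) (hm : 0 < m) (f : Fin m → (E d →ᵃ[ℝ] E d))
    (hb : ∀ i, Function.Bijective (f i)) : (⋂ i, f i '' KK d hd).Nonempty := by
  classical
  -- linear parts are bijective
  have hlin : ∀ i, Function.Bijective ((f i).linear) := by
    intro i
    have hdec : ⇑((f i).linear) = (fun z => z - f i 0) ∘ ⇑(f i) := by
      funext x
      have h := AffineMap.decomp (f i)
      have h2 : f i x = (f i).linear x + f i 0 := by
        conv_lhs => rw [h]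
        rfl
      simp [h2]
    rw [hdec]
    exact (Equiv.subRight (f i 0)).bijective.comp (hb i)
  set Le : (i : Fin m) → (E d ≃L[ℝ] E d) :=
    fun i => (LinearEquiv.ofBijective (f i).linear (hlin i)).toContinuousLinearEquiv with hLe
  have hLe_apply : ∀ i x, Le i x = (f i).linear x := fun i x => rfl
  set L : Fin m → (E d →L[ℝ] E d) := fun i => (Le i : E d →L[ℝ] E d) with hL
  set Linv : Fin m → (E d →L[ℝ] E d) := fun i => ((Le i).symm : E d →L[ℝ] E d) with hLinv
  have hLLinv : ∀ i, L i * Linv i = 1 := by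
    intro i
    apply ContinuousLinearMap.ext
    intro x
    show L i (Linv i x) = x
    simp only [hL, hLinv, ContinuousLinearEquiv.coe_coe]
    exact (Le i).apply_symm_apply x
  have hLinvL : ∀ i, Linv i * L i = 1 := by
    intro i
    apply ContinuousLinearMap.ext
    intro x
    show Linv i (L i x) = x
    simp only [hL, hLinv, ContinuousLinearEquiv.coe_coe]
    exact (Le i).symm_apply_apply x
  set p : Fin m → E d := fun i => (Le i).symm (f i 0) with hp
  set S : ℝ := ∑ i, (‖Linv i‖ + ‖p i‖) with hS
  have hS0 : 0 ≤ S :=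
    Finset.sum_nonneg fun i _ => add_nonneg (norm_nonneg _) (norm_nonneg _)
  have hterm : ∀ i, ‖Linv i‖ + ‖p i‖ ≤ S := fun i =>
    Finset.single_le_sum (f := fun i => ‖Linv i‖ + ‖p i‖)
      (fun j _ => add_nonneg (norm_nonneg _) (norm_nonneg _)) (Finset.mem_univ i)
  set δ : ℝ := ρ d * κv d / (2 * (1 + S)) with hδ
  have hδpos : 0 < δ := by
    rw [hδ]
    have := ρ_pos d
    have := κv_pos d
    positivity
  have hδS : δ * (1 + S) = ρ d * κv d / 2 := by
    rw [hδ]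
    field_simp
  set Fp : PS d m := fun i => (L i, f i 0) with hFp
  obtain ⟨τ, hτmem, hτdist⟩ := (Dset_dense d m).exists_dist_lt Fp hδpos
  set l : Lam d := ⟨m, ⟨τ, hτmem⟩⟩ with hl
  obtain ⟨n, hn⟩ := ee_surj d l
  have hNdef : ∀ i : Fin m, NN d l i = (τ i).1 := fun i => rfl
  have htdef : ∀ i : Fin m, tvec d l i = (τ i).2 := fun i => rfl
  have hcompN : ∀ i : Fin m, ‖NN d l i - L i‖ < δ := by
    intro i
    have h1 : dist (Fp i) (τ i) ≤ dist Fp τ := dist_le_pi_dist Fp τ i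
    have h2 : dist (Fp i).1 (τ i).1 ≤ dist (Fp i) (τ i) := by
      rw [Prod.dist_eq]; exact le_max_left _ _
    have h3 : dist (Fp i).1 (τ i).1 < δ := lt_of_le_of_lt (le_trans h2 h1) hτdist
    rw [hNdef]
    calc ‖(τ i).1 - L i‖ = dist (τ i).1 (L i) := (dist_eq_norm _ _).symm
      _ = dist (Fp i).1 (τ i).1 := by rw [dist_comm]
      _ < δ := h3
  have hcompt : ∀ i : Fin m, ‖tvec d l i - f i 0‖ < δ := by
    intro i
    have h1 : dist (Fp i) (τ i) ≤ dist Fp τ := dist_le_pi_dist Fp τ i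
    have h2 : dist (Fp i).2 (τ i).2 ≤ dist (Fp i) (τ i) := by
      rw [Prod.dist_eq]; exact le_max_right _ _
    have h3 : dist (Fp i).2 (τ i).2 < δ := lt_of_le_of_lt (le_trans h2 h1) hτdist
    rw [htdef]
    calc ‖(τ i).2 - f i 0‖ = dist (τ i).2 (f i 0) := (dist_eq_norm _ _).symm
      _ = dist (Fp i).2 (τ i).2 := by rw [dist_comm]
      _ < δ := h3
  have hLinv_le : ∀ i, ‖Linv i‖ ≤ 1 + S := by
    intro i
    have := hterm i
    have := norm_nonneg (p i)
    linarith
  have hρκ_lt_one : ρ d * κv d / 2 < 1 := by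
    have h1 := ρ_le d
    have h2 := κv_le_half d
    have h3 := ρ_pos d
    have h4 := κv_pos d
    nlinarith
  have hvalid : validL d l := by
    intro i
    have hkey : ‖(L i - NN d l i) * Linv i‖ < 1 := by
      calc ‖(L i - NN d l i) * Linv i‖ ≤ ‖L i - NN d l i‖ * ‖Linv i‖ := norm_mul_le _ _
        _ ≤ δ * (1 + S) := by
            apply mul_le_mul _ (hLinv_le i) (norm_nonneg _) hδpos.le
            rw [norm_sub_rev]
            exact (hcompN i).le
        _ = ρ d * κv d / 2 := hδS
        _ < 1 := hρκ_lt_one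
    have hunit1 : IsUnit (1 - (L i - NN d l i) * Linv i) :=
      isUnit_one_sub_of_norm_lt_one hkey
    have hLunit : IsUnit (L i) := ⟨⟨L i, Linv i, hLLinv i, hLinvL i⟩, rfl⟩
    have heq : NN d l i = (1 - (L i - NN d l i) * Linv i) * L i := by
      rw [sub_mul, one_mul, mul_assoc, hLinvL i, mul_one, sub_sub_cancel]
    rw [heq]
    exact hunit1.mul hLunit
  -- data for the primitive
  set Mi : Fin m → (E d →L[ℝ] E d) := fun i => NN d l i * Linv i with hMi
  set g0 : Fin m → E d := fun i => tvec d l i - NN d l i (p i) with hg0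
  set ti : Fin m → E d :=
    fun i => (rr' d hd n l)⁻¹ • ((Mi i - 1) (vv d hd n l) + g0 i) with hti
  have hMisub : ∀ i, Mi i - 1 = (NN d l i - L i) * Linv i := by
    intro i
    rw [hMi]
    simp only
    rw [sub_mul, hLLinv i]
  have hMid : ∀ i, ‖Mi i - 1‖ ≤ δ * ‖Linv i‖ := by
    intro i
    rw [hMisub i]
    calc ‖(NN d l i - L i) * Linv i‖ ≤ ‖NN d l i - L i‖ * ‖Linv i‖ := norm_mul_le _ _
      _ ≤ δ * ‖Linv i‖ := mul_le_mul_of_nonneg_right (hcompN i).le (norm_nonneg _)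
  have hMin : ∀ i, ‖Mi i - 1‖ ≤ ρ d * κv d / 2 := by
    intro i
    calc ‖Mi i - 1‖ ≤ δ * ‖Linv i‖ := hMid i
      _ ≤ δ * (1 + S) := mul_le_mul_of_nonneg_left (hLinv_le i) hδpos.le
      _ = ρ d * κv d / 2 := hδS
  have hMiρ : ∀ i, ‖Mi i - 1‖ ≤ ρ d := by
    intro i
    have h1 := hMin i
    have h2 := κv_le_half d
    have h3 := ρ_pos d
    have h4 := κv_pos d
    nlinarith
  have hLp : ∀ i, L i (p i) = f i 0 := by
    intro i
    simp only [hL, hp, ContinuousLinearEquiv.coe_coe]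
    exact (Le i).apply_symm_apply _
  have hg0b : ∀ i, ‖g0 i‖ ≤ δ * (1 + ‖p i‖) := by
    intro i
    have heq : g0 i = (tvec d l i - f i 0) + (L i - NN d l i) (p i) := by
      rw [hg0]
      simp only [ContinuousLinearMap.sub_apply]
      rw [hLp i]
      abel
    rw [heq]
    calc ‖(tvec d l i - f i 0) + (L i - NN d l i) (p i)‖
        ≤ ‖tvec d l i - f i 0‖ + ‖(L i - NN d l i) (p i)‖ := norm_add_le _ _
      _ ≤ δ + ‖L i - NN d l i‖ * ‖p i‖ :=
          add_le_add (hcompt i).le (ContinuousLinearMap.le_opNorm _ _)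
      _ ≤ δ + δ * ‖p i‖ := by
          have h1 : ‖L i - NN d l i‖ ≤ δ := by
            rw [norm_sub_rev]; exact (hcompN i).le
          have h2 := norm_nonneg (p i)
          nlinarith
      _ = δ * (1 + ‖p i‖) := by ring
  have htiρ : ∀ i, ‖ti i‖ ≤ ρ d := by
    intro i
    have hrpos := rr'_pos d hd n l
    have hV0 := norm_nonneg (vv d hd n l)
    rw [hti]
    simp only
    rw [norm_smul, Real.norm_eq_abs, abs_of_pos (inv_pos.2 hrpos)]
    have h1 : ‖(Mi i - 1) (vv d hd n l) + g0 i‖ ≤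
        ρ d * κv d / 2 * (1 + ‖vv d hd n l‖) := by
      have h2 : ‖(Mi i - 1) (vv d hd n l)‖ ≤ δ * ‖Linv i‖ * ‖vv d hd n l‖ := by
        calc ‖(Mi i - 1) (vv d hd n l)‖ ≤ ‖Mi i - 1‖ * ‖vv d hd n l‖ :=
              ContinuousLinearMap.le_opNorm _ _
          _ ≤ δ * ‖Linv i‖ * ‖vv d hd n l‖ :=
              mul_le_mul_of_nonneg_right (hMid i) hV0
      have h3 := hg0b i
      have h4 : ‖(Mi i - 1) (vv d hd n l) + g0 i‖ ≤
          δ * (‖Linv i‖ * ‖vv d hd n l‖ + 1 + ‖p i‖) := by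
        calc ‖(Mi i - 1) (vv d hd n l) + g0 i‖
            ≤ ‖(Mi i - 1) (vv d hd n l)‖ + ‖g0 i‖ := norm_add_le _ _
          _ ≤ δ * ‖Linv i‖ * ‖vv d hd n l‖ + δ * (1 + ‖p i‖) := add_le_add h2 h3
          _ = δ * (‖Linv i‖ * ‖vv d hd n l‖ + 1 + ‖p i‖) := by ring
      have h5 : ‖Linv i‖ * ‖vv d hd n l‖ + 1 + ‖p i‖ ≤ (1 + S) * (1 + ‖vv d hd n l‖) := by
        have h6 := hterm i
        have h7 := norm_nonneg (Linv i)
        have h8 := norm_nonneg (p i)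
        nlinarith
      calc ‖(Mi i - 1) (vv d hd n l) + g0 i‖
          ≤ δ * (‖Linv i‖ * ‖vv d hd n l‖ + 1 + ‖p i‖) := h4
        _ ≤ δ * ((1 + S) * (1 + ‖vv d hd n l‖)) :=
            mul_le_mul_of_nonneg_left h5 hδpos.le
        _ = (δ * (1 + S)) * (1 + ‖vv d hd n l‖) := by ring
        _ = ρ d * κv d / 2 * (1 + ‖vv d hd n l‖) := by rw [hδS]
    have hrr : rr' d hd n l = κv d * (1 + ‖vv d hd n l‖) := rfl
    have hfinal : (rr' d hd n l)⁻¹ * (ρ d * κv d / 2 * (1 + ‖vv d hd n l‖)) = ρ d / 2 := by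
      rw [hrr]
      have hκ := κv_pos d
      field_simp
    calc (rr' d hd n l)⁻¹ * ‖(Mi i - 1) (vv d hd n l) + g0 i‖
        ≤ (rr' d hd n l)⁻¹ * (ρ d * κv d / 2 * (1 + ‖vv d hd n l‖)) :=
          mul_le_mul_of_nonneg_left h1 (inv_pos.2 hrpos).le
      _ = ρ d / 2 := hfinal
      _ ≤ ρ d := by linarith [ρ_pos d]
  obtain ⟨u, hu⟩ := prim m hm Mi ti hMiρ htiρ
  set xx : E d := rr' d hd n l • u + vv d hd n l with hxx
  refine ⟨xx, Set.mem_iInter.2 fun i => ?_⟩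
  set wit : E d := (Le i).symm (xx - f i 0) with hwit
  have hfwit : f i wit = xx := by
    have h := AffineMap.decomp (f i)
    have h1 : f i wit = (f i).linear wit + f i 0 := by
      conv_lhs => rw [h]
      rfl
    rw [h1]
    have h2 : (f i).linear wit = xx - f i 0 := by
      rw [← hLe_apply i wit, hwit]
      exact (Le i).apply_symm_apply _
    rw [h2]
    abel
  have hmemwit : wit ∈ KK d hd := by
    apply Set.mem_iUnion.2 ⟨n, ?_⟩
    rw [hn]
    unfold pieceFor
    rw [if_pos hvalid]
    apply Set.mem_iUnion.2 ⟨i, ?_⟩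
    refine ⟨Mi i u + ti i, hu i, ?_⟩
    have hrr_ti : rr' d hd n l • ti i = (Mi i - 1) (vv d hd n l) + g0 i := by
      rw [hti]
      simp only
      rw [smul_smul, mul_inv_cancel₀ (rr'_pos d hd n l).ne', one_smul]
    have hNwit : NN d l i wit =
        rr' d hd n l • (Mi i u + ti i) + vv d hd n l - tvec d l i := by
      have hL1 : NN d l i wit = Mi i xx - NN d l i (p i) := by
        rw [hwit]
        have hsub : (Le i).symm (xx - f i 0) = (Le i).symm xx - p i := by
          rw [map_sub, hp]
        rw [hsub, map_sub]
        congr 1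
      rw [hL1, smul_add, hrr_ti, hxx]
      rw [map_add, _root_.map_smul]
      rw [hg0]
      simp only [ContinuousLinearMap.sub_apply, ContinuousLinearMap.one_apply]
      abel
    show pmap d hd n l i (Mi i u + ti i) = wit
    unfold pmap
    rw [← hNwit]
    exact ring_inverse_apply d (hvalid i) wit
  exact ⟨wit, hmemwit, hfwit⟩

end Glob

end

end S16

theorem stmt16 (d : ℕ) (hd : 1 ≤ d) :
    ∃ A : Set (EuclideanSpace ℝ (Fin d)), IsClosed A ∧ dimH A = 0 ∧
    ∀ m : ℕ, 1 ≤ m →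
      ∀ f : Fin m → (EuclideanSpace ℝ (Fin d) →ᵃ[ℝ] EuclideanSpace ℝ (Fin d)),
      (∀ i, Function.Bijective (f i)) → (⋂ i, f i '' A).Nonempty := by
  refine ⟨S16.KK d hd, S16.KK_closed d hd, S16.KK_dimH d hd, ?_⟩
  intro m hm f hbij
  exact S16.KK_inter d hd m hm f hbij
end

section
/- Let A ⊂ ℝ be a finite set and let S = {(x,y) ∈ ℝ² : there exists r > 0 such that x−r, x+r, y−r, y+r ∈ A}. Then S is finite and |S| ≤ 2^{4/3}·|A|^{8/3}. -/
set_option maxHeartbeats 1000000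


theorem stmt17 (A : Set ℝ) (hA : A.Finite) (S : Set (ℝ × ℝ))
    (hS : S = {p : ℝ × ℝ | ∃ r > (0:ℝ),
      p.1 - r ∈ A ∧ p.1 + r ∈ A ∧ p.2 - r ∈ A ∧ p.2 + r ∈ A}) :
    S.Finite ∧ (S.ncard : ℝ) ≤ (2:ℝ) ^ ((4:ℝ) / 3) * (A.ncard : ℝ) ^ ((8:ℝ) / 3) := by
  classical
  have hmem : ∀ p : ℝ × ℝ, p ∈ S ↔
      ∃ r, 0 < r ∧ p.1 - r ∈ A ∧ p.1 + r ∈ A ∧ p.2 - r ∈ A ∧ p.2 + r ∈ A := by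
    intro p; rw [hS]; exact Iff.rfl
  -- a witness radius function
  obtain ⟨W, hW⟩ : ∃ W : ℝ × ℝ → ℝ, ∀ p ∈ S, 0 < W p ∧ p.1 - W p ∈ A ∧ p.1 + W p ∈ A ∧
      p.2 - W p ∈ A ∧ p.2 + W p ∈ A := by
    refine ⟨fun p => if h : ∃ r, 0 < r ∧ p.1 - r ∈ A ∧ p.1 + r ∈ A ∧ p.2 - r ∈ A ∧ p.2 + r ∈ A
      then h.choose else 0, fun p hp => ?_⟩
    have h := (hmem p).1 hp
    simp only [dif_pos h]
    exact h.choose_spec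
  -- finiteness of S
  have hfin : S.Finite := by
    have himg : ((Set.image2 (fun a b : ℝ => a - b) A A) ×ˢ
        (Set.image2 (fun a b : ℝ => a + b) A A)).Finite :=
      (hA.image2 _ hA).prod (hA.image2 _ hA)
    refine (himg.image (fun q : ℝ × ℝ => ((q.2 - q.1) / 2, (q.2 + q.1) / 2))).subset ?_
    rintro ⟨x, y⟩ hp
    obtain ⟨hr, h1, h2, h3, h4⟩ := hW (x, y) hp
    refine ⟨(y - x, x + y), ⟨?_, ?_⟩, ?_⟩
    · exact ⟨y - W (x, y), h3, x - W (x, y), h1, by ring⟩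
    · exact ⟨x - W (x, y), h1, y + W (x, y), h4, by ring⟩
    · show ((x + y - (y - x)) / 2, (x + y + (y - x)) / 2) = (x, y)
      have e1 : (x + y - (y - x)) / 2 = x := by ring
      have e2 : (x + y + (y - x)) / 2 = y := by ring
      rw [e1, e2]
  refine ⟨hfin, ?_⟩
  set 𝒜 : Finset ℝ := hA.toFinset with h𝒜
  have hAmem : ∀ x : ℝ, x ∈ 𝒜 ↔ x ∈ A := fun x => hA.mem_toFinset
  set T : Finset (ℝ × ℝ) := hfin.toFinset with hT
  have hTmem : ∀ p : ℝ × ℝ, p ∈ T ↔ p ∈ S := fun p => hfin.mem_toFinset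
  have hcardS : S.ncard = T.card := Set.ncard_eq_toFinset_card S hfin
  have hcardA : A.ncard = 𝒜.card := Set.ncard_eq_toFinset_card A hA
  rw [hcardS, hcardA]
  -- trivial case : A empty
  by_cases hAe : A = ∅
  · have hTe : T = ∅ := by
      rw [Finset.eq_empty_iff_forall_notMem]
      intro p hp
      obtain ⟨_, h1, _, _, _⟩ := hW p ((hTmem p).1 hp)
      rw [hAe] at h1
      exact h1
    have h𝒜e : 𝒜 = ∅ := by
      rw [Finset.eq_empty_iff_forall_notMem]
      intro x hx
      have := (hAmem x).1 hx
      rw [hAe] at this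
      exact this
    rw [hTe, h𝒜e]
    simp only [Finset.card_empty, Nat.cast_zero, Real.zero_rpow (by norm_num : (8:ℝ)/3 ≠ 0),
      mul_zero, le_refl]
  -- main case
  have hAne : 𝒜.Nonempty := by
    obtain ⟨x, hx⟩ := Set.nonempty_iff_ne_empty.2 hAe
    exact ⟨x, (hAmem x).2 hx⟩
  set n : ℕ := 𝒜.card with hn
  have hn1 : 1 ≤ n := Finset.card_pos.2 hAne
  set N : ℝ := (n : ℝ) with hN
  have hN1 : (1:ℝ) ≤ N := by rw [hN]; exact_mod_cast hn1
  have hN0 : (0:ℝ) < N := lt_of_lt_of_le one_pos hN1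
  set K : ℝ := 2 ^ ((1:ℝ)/3) * N ^ ((2:ℝ)/3) with hK
  have hK0 : (0:ℝ) < K := by
    apply mul_pos (Real.rpow_pos_of_pos two_pos _) (Real.rpow_pos_of_pos hN0 _)
  -- rows and columns
  set R : ℝ → Finset ℝ := fun c => 𝒜.filter (fun u => u + c ∈ 𝒜) with hR
  set C : ℝ → Finset ℝ := fun s => 𝒜.filter (fun u => s - u ∈ 𝒜) with hC
  set D : Finset ℝ := (𝒜 ×ˢ 𝒜).image (fun q => q.1 - q.2) with hD
  set Sm : Finset ℝ := (𝒜 ×ˢ 𝒜).image (fun q => q.1 + q.2) with hSm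
  -- total row mass
  have hrowsum : ∑ c ∈ D, (R c).card = n * n := by
    have hb : (D.sigma (fun c => R c)).card = (𝒜 ×ˢ 𝒜).card := by
      apply Finset.card_bij (fun q _ => (q.2, q.2 + q.1))
      · rintro ⟨c, u⟩ hq
        rw [Finset.mem_sigma] at hq
        obtain ⟨hc, hu⟩ := hq
        rw [hR, Finset.mem_filter] at hu
        exact Finset.mem_product.2 ⟨hu.1, hu.2⟩
      · rintro ⟨c1, u1⟩ h1 ⟨c2, u2⟩ h2 heq
        rw [Prod.mk.injEq] at heq
        obtain ⟨hu, hv⟩ := heq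
        have hc : c1 = c2 := by
          have := hv
          rw [hu] at this
          linarith
        subst hu; subst hc; rfl
      · rintro ⟨u, v⟩ huv
        rw [Finset.mem_product] at huv
        refine ⟨⟨v - u, u⟩, ?_, ?_⟩
        · rw [Finset.mem_sigma]
          constructor
          · rw [hD, Finset.mem_image]
            exact ⟨(v, u), Finset.mem_product.2 ⟨huv.2, huv.1⟩, rfl⟩
          · rw [hR, Finset.mem_filter]
            refine ⟨huv.1, ?_⟩
            have e : u + (v - u) = v := by ring
            rw [e]; exact huv.2
        · have e : u + (v - u) = v := by ring
          rw [e]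
      
    rw [Finset.card_sigma] at hb
    rw [hb, Finset.card_product]
  -- total column mass
  have hcolsum : ∑ s ∈ Sm, (C s).card = n * n := by
    have hb : (Sm.sigma (fun s => C s)).card = (𝒜 ×ˢ 𝒜).card := by
      apply Finset.card_bij (fun q _ => (q.2, q.1 - q.2))
      · rintro ⟨s, u⟩ hq
        rw [Finset.mem_sigma] at hq
        obtain ⟨hs, hu⟩ := hq
        rw [hC, Finset.mem_filter] at hu
        exact Finset.mem_product.2 ⟨hu.1, hu.2⟩
      · rintro ⟨s1, u1⟩ h1 ⟨s2, u2⟩ h2 heq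
        rw [Prod.mk.injEq] at heq
        obtain ⟨hu, hv⟩ := heq
        have hs : s1 = s2 := by
          rw [hu] at hv
          linarith
        subst hu; subst hs; rfl
      · rintro ⟨u, v⟩ huv
        rw [Finset.mem_product] at huv
        refine ⟨⟨u + v, u⟩, ?_, ?_⟩
        · rw [Finset.mem_sigma]
          constructor
          · rw [hSm, Finset.mem_image]
            exact ⟨(u, v), Finset.mem_product.2 ⟨huv.1, huv.2⟩, rfl⟩
          · rw [hC, Finset.mem_filter]
            refine ⟨huv.1, ?_⟩
            have e : u + v - u = v := by ring
            rw [e]; exact huv.2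
        · have e : u + v - u = v := by ring
          rw [e]
    rw [Finset.card_sigma] at hb
    rw [hb, Finset.card_product]
  have hrowsumR : ∑ c ∈ D, ((R c).card : ℝ) = N * N := by
    rw [← Nat.cast_sum, hrowsum]
    push_cast
    rfl
  have hcolsumR : ∑ s ∈ Sm, ((C s).card : ℝ) = N * N := by
    rw [← Nat.cast_sum, hcolsum]
    push_cast
    rfl
  -- half-pairs lemma
  have hhalf : ∀ B : Finset ℝ,
      2 * ((B ×ˢ B).filter (fun q : ℝ × ℝ => q.1 < q.2)).card ≤ B.card * B.card := by
    intro B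
    set P1 := (B ×ˢ B).filter (fun q : ℝ × ℝ => q.1 < q.2) with hP1
    set P2 := (B ×ˢ B).filter (fun q : ℝ × ℝ => q.2 < q.1) with hP2
    have hcardeq : P1.card = P2.card := by
      apply Finset.card_bij (fun q _ => q.swap)
      · intro q hq
        rw [hP1, Finset.mem_filter, Finset.mem_product] at hq
        rw [hP2, Finset.mem_filter, Finset.mem_product]
        exact ⟨⟨hq.1.2, hq.1.1⟩, hq.2⟩
      · intro q1 _ q2 _ h
        have := congrArg Prod.swap h
        simpa using this
      · intro q hq
        rw [hP2, Finset.mem_filter, Finset.mem_product] at hq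
        refine ⟨q.swap, ?_, by simp⟩
        rw [hP1, Finset.mem_filter, Finset.mem_product]
        exact ⟨⟨hq.1.2, hq.1.1⟩, hq.2⟩
    have hdisj : Disjoint P1 P2 := by
      rw [Finset.disjoint_left]
      intro q h1 h2
      rw [hP1, Finset.mem_filter] at h1
      rw [hP2, Finset.mem_filter] at h2
      exact absurd h2.2 (not_lt.2 (le_of_lt h1.2))
    have hsub : P1 ∪ P2 ⊆ B ×ˢ B :=
      Finset.union_subset (Finset.filter_subset _ _) (Finset.filter_subset _ _)
    have hcard := Finset.card_le_card hsub
    rw [Finset.card_union_of_disjoint hdisj, Finset.card_product] at hcard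
    omega
  -- the three parts
  set prow : ℝ × ℝ → Prop := fun p => ((R (p.2 - p.1)).card : ℝ) ≤ K with hprow
  set pcol : ℝ × ℝ → Prop := fun p => ((C (p.1 + p.2)).card : ℝ) ≤ K with hpcol
  set T1 : Finset (ℝ × ℝ) := T.filter prow with hT1
  set T' : Finset (ℝ × ℝ) := T.filter (fun p => ¬ prow p) with hT'
  set T2 : Finset (ℝ × ℝ) := T'.filter pcol with hT2
  set T3 : Finset (ℝ × ℝ) := T'.filter (fun p => ¬ pcol p) with hT3
  have hsplit : T.card = T1.card + T2.card + T3.card := by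
    have h1 : T1.card + T'.card = T.card :=
      Finset.card_filter_add_card_filter_not prow
    have h2 : T2.card + T3.card = T'.card :=
      Finset.card_filter_add_card_filter_not pcol
    omega
  set Dpoor : Finset ℝ := D.filter (fun c => ((R c).card : ℝ) ≤ K) with hDpoor
  set Drich : Finset ℝ := D.filter (fun c => ¬ ((R c).card : ℝ) ≤ K) with hDrich
  set Smpoor : Finset ℝ := Sm.filter (fun s => ((C s).card : ℝ) ≤ K) with hSmpoor
  set Smrich : Finset ℝ := Sm.filter (fun s => ¬ ((C s).card : ℝ) ≤ K) with hSmrich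
  -- basic facts about points of T
  have hpoint : ∀ p : ℝ × ℝ, p ∈ T →
      (p.1 - W p ∈ R (p.2 - p.1)) ∧ (p.1 + W p ∈ R (p.2 - p.1)) ∧
      (p.1 - W p ∈ C (p.1 + p.2)) ∧ (p.1 + W p ∈ C (p.1 + p.2)) ∧
      (p.1 - W p < p.1 + W p) ∧ (p.2 - p.1 ∈ D) ∧ (p.1 + p.2 ∈ Sm) := by
    intro p hp
    obtain ⟨hr, h1, h2, h3, h4⟩ := hW p ((hTmem p).1 hp)
    have e1 : p.1 - W p + (p.2 - p.1) = p.2 - W p := by ring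
    have e2 : p.1 + W p + (p.2 - p.1) = p.2 + W p := by ring
    have e3 : p.1 + p.2 - (p.1 - W p) = p.2 + W p := by ring
    have e4 : p.1 + p.2 - (p.1 + W p) = p.2 - W p := by ring
    refine ⟨?_, ?_, ?_, ?_, by linarith, ?_, ?_⟩
    · rw [hR, Finset.mem_filter, e1]
      exact ⟨(hAmem _).2 h1, (hAmem _).2 h3⟩
    · rw [hR, Finset.mem_filter, e2]
      exact ⟨(hAmem _).2 h2, (hAmem _).2 h4⟩
    · rw [hC, Finset.mem_filter, e3]
      exact ⟨(hAmem _).2 h1, (hAmem _).2 h4⟩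
    · rw [hC, Finset.mem_filter, e4]
      exact ⟨(hAmem _).2 h2, (hAmem _).2 h3⟩
    · rw [hD, Finset.mem_image]
      refine ⟨(p.2 - W p, p.1 - W p), Finset.mem_product.2 ⟨(hAmem _).2 h3, (hAmem _).2 h1⟩, ?_⟩
      show p.2 - W p - (p.1 - W p) = p.2 - p.1
      ring
    · rw [hSm, Finset.mem_image]
      refine ⟨(p.1 - W p, p.2 + W p), Finset.mem_product.2 ⟨(hAmem _).2 h1, (hAmem _).2 h4⟩, ?_⟩
      show p.1 - W p + (p.2 + W p) = p.1 + p.2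
      ring
  -- bound on T1
  have hb1 : (T1.card : ℝ) ≤ K / 2 * (N * N) := by
    have hinj : T1.card ≤ (Dpoor.sigma (fun c => ((R c) ×ˢ (R c)).filter
        (fun q : ℝ × ℝ => q.1 < q.2))).card := by
      apply Finset.card_le_card_of_injOn
        (fun p => ⟨p.2 - p.1, (p.1 - W p, p.1 + W p)⟩)
      · intro p hp
        have hpT : p ∈ T := Finset.filter_subset _ _ hp
        have hpoor : prow p := (Finset.mem_filter.1 hp).2
        obtain ⟨m1, m2, _, _, mlt, mD, _⟩ := hpoint p hpT
        rw [Finset.mem_coe, Finset.mem_sigma]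
        constructor
        · rw [hDpoor, Finset.mem_filter]
          exact ⟨mD, hpoor⟩
        · rw [Finset.mem_filter, Finset.mem_product]
          exact ⟨⟨m1, m2⟩, mlt⟩
      · intro p hp q hq heq
        have hfst := congrArg (fun z : (_ : ℝ) × (ℝ × ℝ) => z.1) heq
        have hsnd := congrArg (fun z : (_ : ℝ) × (ℝ × ℝ) => z.2) heq
        simp only [Prod.mk.injEq] at hfst hsnd
        obtain ⟨ha, hb⟩ := hsnd
        have h1 : p.1 = q.1 := by linarith
        have h2 : p.2 = q.2 := by linarith [hfst]
        exact Prod.ext h1 h2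
    have hsum : ((Dpoor.sigma (fun c => ((R c) ×ˢ (R c)).filter
        (fun q : ℝ × ℝ => q.1 < q.2))).card : ℝ)
        = ∑ c ∈ Dpoor, ((((R c) ×ˢ (R c)).filter (fun q : ℝ × ℝ => q.1 < q.2)).card : ℝ) := by
      rw [Finset.card_sigma]
      push_cast
      rfl
    have hstep : ∑ c ∈ Dpoor, ((((R c) ×ˢ (R c)).filter (fun q : ℝ × ℝ => q.1 < q.2)).card : ℝ)
        ≤ K / 2 * (N * N) := by
      have h1 : ∀ c ∈ Dpoor, ((((R c) ×ˢ (R c)).filter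
          (fun q : ℝ × ℝ => q.1 < q.2)).card : ℝ) ≤ K / 2 * ((R c).card : ℝ) := by
        intro c hc
        have hpoor : ((R c).card : ℝ) ≤ K := (Finset.mem_filter.1 hc).2
        have h2p := hhalf (R c)
        have h2pR : (2:ℝ) * ((((R c) ×ˢ (R c)).filter (fun q : ℝ × ℝ => q.1 < q.2)).card : ℝ)
            ≤ ((R c).card : ℝ) * ((R c).card : ℝ) := by
          have h2q := (Nat.cast_le (α := ℝ)).mpr h2p
          push_cast at h2q
          exact h2q
        nlinarith [show (0:ℝ) ≤ ((R c).card : ℝ) from Nat.cast_nonneg _]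
      calc ∑ c ∈ Dpoor, ((((R c) ×ˢ (R c)).filter (fun q : ℝ × ℝ => q.1 < q.2)).card : ℝ)
          ≤ ∑ c ∈ Dpoor, K / 2 * ((R c).card : ℝ) := Finset.sum_le_sum h1
        _ ≤ ∑ c ∈ D, K / 2 * ((R c).card : ℝ) := by
            apply Finset.sum_le_sum_of_subset_of_nonneg (Finset.filter_subset _ _)
            intro c _ _
            positivity
        _ = K / 2 * ∑ c ∈ D, ((R c).card : ℝ) := by rw [Finset.mul_sum]
        _ = K / 2 * (N * N) := by rw [hrowsumR]
    calc (T1.card : ℝ) ≤ _ := (Nat.cast_le (α := ℝ)).mpr hinj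
      _ = _ := hsum
      _ ≤ K / 2 * (N * N) := hstep
  -- bound on T2
  have hb2 : (T2.card : ℝ) ≤ K / 2 * (N * N) := by
    have hinj : T2.card ≤ (Smpoor.sigma (fun s => ((C s) ×ˢ (C s)).filter
        (fun q : ℝ × ℝ => q.1 < q.2))).card := by
      apply Finset.card_le_card_of_injOn
        (fun p => ⟨p.1 + p.2, (p.1 - W p, p.1 + W p)⟩)
      · intro p hp
        have hpT' : p ∈ T' := Finset.filter_subset _ _ hp
        have hpT : p ∈ T := Finset.filter_subset _ _ hpT'
        have hpoor : pcol p := (Finset.mem_filter.1 hp).2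
        obtain ⟨_, _, m3, m4, mlt, _, mSm⟩ := hpoint p hpT
        rw [Finset.mem_coe, Finset.mem_sigma]
        constructor
        · rw [hSmpoor, Finset.mem_filter]
          exact ⟨mSm, hpoor⟩
        · rw [Finset.mem_filter, Finset.mem_product]
          exact ⟨⟨m3, m4⟩, mlt⟩
      · intro p hp q hq heq
        have hfst := congrArg (fun z : (_ : ℝ) × (ℝ × ℝ) => z.1) heq
        have hsnd := congrArg (fun z : (_ : ℝ) × (ℝ × ℝ) => z.2) heq
        simp only [Prod.mk.injEq] at hfst hsnd
        obtain ⟨ha, hb⟩ := hsnd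
        have h1 : p.1 = q.1 := by linarith
        have h2 : p.2 = q.2 := by linarith [hfst]
        exact Prod.ext h1 h2
    have hsum : ((Smpoor.sigma (fun s => ((C s) ×ˢ (C s)).filter
        (fun q : ℝ × ℝ => q.1 < q.2))).card : ℝ)
        = ∑ s ∈ Smpoor, ((((C s) ×ˢ (C s)).filter (fun q : ℝ × ℝ => q.1 < q.2)).card : ℝ) := by
      rw [Finset.card_sigma]
      push_cast
      rfl
    have hstep : ∑ s ∈ Smpoor, ((((C s) ×ˢ (C s)).filter (fun q : ℝ × ℝ => q.1 < q.2)).card : ℝ)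
        ≤ K / 2 * (N * N) := by
      have h1 : ∀ s ∈ Smpoor, ((((C s) ×ˢ (C s)).filter
          (fun q : ℝ × ℝ => q.1 < q.2)).card : ℝ) ≤ K / 2 * ((C s).card : ℝ) := by
        intro s hs
        have hpoor : ((C s).card : ℝ) ≤ K := (Finset.mem_filter.1 hs).2
        have h2p := hhalf (C s)
        have h2pR : (2:ℝ) * ((((C s) ×ˢ (C s)).filter (fun q : ℝ × ℝ => q.1 < q.2)).card : ℝ)
            ≤ ((C s).card : ℝ) * ((C s).card : ℝ) := by
          have h2q := (Nat.cast_le (α := ℝ)).mpr h2p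
          push_cast at h2q
          exact h2q
        nlinarith [show (0:ℝ) ≤ ((C s).card : ℝ) from Nat.cast_nonneg _]
      calc ∑ s ∈ Smpoor, ((((C s) ×ˢ (C s)).filter (fun q : ℝ × ℝ => q.1 < q.2)).card : ℝ)
          ≤ ∑ s ∈ Smpoor, K / 2 * ((C s).card : ℝ) := Finset.sum_le_sum h1
        _ ≤ ∑ s ∈ Sm, K / 2 * ((C s).card : ℝ) := by
            apply Finset.sum_le_sum_of_subset_of_nonneg (Finset.filter_subset _ _)
            intro s _ _
            positivity
        _ = K / 2 * ∑ s ∈ Sm, ((C s).card : ℝ) := by rw [Finset.mul_sum]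
        _ = K / 2 * (N * N) := by rw [hcolsumR]
    calc (T2.card : ℝ) ≤ _ := (Nat.cast_le (α := ℝ)).mpr hinj
      _ = _ := hsum
      _ ≤ K / 2 * (N * N) := hstep
  -- bound on T3
  have hb3 : (T3.card : ℝ) ≤ (N * N / K) * (N * N / K) := by
    have hinj : T3.card ≤ (Drich ×ˢ Smrich).card := by
      apply Finset.card_le_card_of_injOn (fun p => (p.2 - p.1, p.1 + p.2))
      · intro p hp
        have hpT' : p ∈ T' := Finset.filter_subset _ _ hp
        have hpT : p ∈ T := Finset.filter_subset _ _ hpT'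
        have hrich1 : ¬ prow p := (Finset.mem_filter.1 hpT').2
        have hrich2 : ¬ pcol p := (Finset.mem_filter.1 hp).2
        obtain ⟨_, _, _, _, _, mD, mSm⟩ := hpoint p hpT
        rw [Finset.mem_coe, Finset.mem_product]
        constructor
        · rw [hDrich, Finset.mem_filter]
          exact ⟨mD, hrich1⟩
        · rw [hSmrich, Finset.mem_filter]
          exact ⟨mSm, hrich2⟩
      · intro p hp q hq heq
        rw [Prod.mk.injEq] at heq
        have h1 : p.1 = q.1 := by linarith [heq.1, heq.2]
        have h2 : p.2 = q.2 := by linarith [heq.1, heq.2]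
        exact Prod.ext h1 h2
    have hrich : ∀ (E : Finset ℝ) (F : ℝ → Finset ℝ),
        (∀ c ∈ E, K ≤ ((F c).card : ℝ)) → (∑ c ∈ E, ((F c).card : ℝ)) ≤ N * N →
        (E.card : ℝ) ≤ N * N / K := by
      intro E F hEK hEsum
      rw [le_div_iff₀ hK0]
      calc (E.card : ℝ) * K = E.card • K := by rw [nsmul_eq_mul]
        _ ≤ ∑ c ∈ E, ((F c).card : ℝ) := Finset.card_nsmul_le_sum E _ K hEK
        _ ≤ N * N := hEsum
    have hd1 : (Drich.card : ℝ) ≤ N * N / K := by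
      apply hrich Drich R
      · intro c hc
        have := (Finset.mem_filter.1 hc).2
        linarith [not_le.1 this]
      · rw [← hrowsumR]
        apply Finset.sum_le_sum_of_subset_of_nonneg (Finset.filter_subset _ _)
        intro c _ _
        positivity
    have hd2 : (Smrich.card : ℝ) ≤ N * N / K := by
      apply hrich Smrich C
      · intro s hs
        have := (Finset.mem_filter.1 hs).2
        linarith [not_le.1 this]
      · rw [← hcolsumR]
        apply Finset.sum_le_sum_of_subset_of_nonneg (Finset.filter_subset _ _)
        intro s _ _
        positivity
    calc (T3.card : ℝ) ≤ ((Drich ×ˢ Smrich).card : ℝ) := (Nat.cast_le (α := ℝ)).mpr hinj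
      _ = (Drich.card : ℝ) * (Smrich.card : ℝ) := by
          rw [Finset.card_product]; push_cast; rfl
      _ ≤ (N * N / K) * (N * N / K) := by
          apply mul_le_mul hd1 hd2 (Nat.cast_nonneg _)
          positivity
  -- final arithmetic
  have htot : (T.card : ℝ) ≤ K * (N * N) + (N * N / K) * (N * N / K) := by
    have : (T.card : ℝ) = (T1.card : ℝ) + (T2.card : ℝ) + (T3.card : ℝ) := by
      rw [hsplit]; push_cast; ring
    rw [this]
    linarith
  -- express things via a := 2^(1/3), x := N^(1/3)
  set a : ℝ := 2 ^ ((1:ℝ)/3) with ha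
  set x : ℝ := N ^ ((1:ℝ)/3) with hx
  have ha0 : 0 < a := Real.rpow_pos_of_pos two_pos _
  have hx0 : 0 < x := Real.rpow_pos_of_pos hN0 _
  have ha3 : a ^ 3 = 2 := by
    rw [ha, ← Real.rpow_natCast (2 ^ ((1:ℝ)/3)) 3, ← Real.rpow_mul (by norm_num : (0:ℝ) ≤ 2)]
    norm_num
  have hx3 : x ^ 3 = N := by
    rw [hx, ← Real.rpow_natCast (N ^ ((1:ℝ)/3)) 3, ← Real.rpow_mul (le_of_lt hN0)]
    norm_num
  have hx2 : N ^ ((2:ℝ)/3) = x ^ 2 := by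
    rw [hx, ← Real.rpow_natCast (N ^ ((1:ℝ)/3)) 2, ← Real.rpow_mul (le_of_lt hN0)]
    norm_num
  have hx8 : N ^ ((8:ℝ)/3) = x ^ 8 := by
    rw [hx, ← Real.rpow_natCast (N ^ ((1:ℝ)/3)) 8, ← Real.rpow_mul (le_of_lt hN0)]
    norm_num
  have ha4 : (2:ℝ) ^ ((4:ℝ)/3) = a ^ 4 := by
    rw [ha, ← Real.rpow_natCast (2 ^ ((1:ℝ)/3)) 4, ← Real.rpow_mul (by norm_num : (0:ℝ) ≤ 2)]
    norm_num
  have hKax : K = a * x ^ 2 := by rw [hK, hx2]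
  have hNx : N = x ^ 3 := hx3.symm
  have hfinal : K * (N * N) + (N * N / K) * (N * N / K) ≤ (2:ℝ) ^ ((4:ℝ)/3) * N ^ ((8:ℝ)/3) := by
    rw [ha4, hx8, hKax, hNx]
    have ha2 : (0:ℝ) < a ^ 2 := pow_pos ha0 2
    have e1 : a * x ^ 2 * (x ^ 3 * x ^ 3) = a * x ^ 8 := by ring
    have e2 : (x ^ 3 * x ^ 3 / (a * x ^ 2)) = x ^ 4 / a := by
      rw [div_eq_div_iff (by positivity : a * x ^ 2 ≠ 0) (ne_of_gt ha0)]
      ring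
    rw [e1, e2]
    have e3 : x ^ 4 / a * (x ^ 4 / a) = x ^ 8 / a ^ 2 := by
      rw [div_mul_div_comm, show x ^ 4 * x ^ 4 = x ^ 8 from by ring,
        show a * a = a ^ 2 from by ring]
    rw [e3]
    have key : a + 1 / a ^ 2 ≤ a ^ 4 := by
      have h1 : a ^ 4 = 2 * a := by
        rw [show a ^ 4 = a * a ^ 3 from by ring, ha3]; ring
      have h2 : 1 / a ^ 2 = a / 2 := by
        rw [div_eq_div_iff (ne_of_gt ha2) (by norm_num : (2:ℝ) ≠ 0), one_mul,
          show a * a ^ 2 = a ^ 3 from by ring, ha3]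
      rw [h1, h2]
      linarith
    -- goal : a * x^8 + x^8 / a^2 ≤ a^4 * x^8
    have h8 : (0:ℝ) ≤ x ^ 8 := le_of_lt (pow_pos hx0 8)
    have hmul := mul_le_mul_of_nonneg_right key h8
    calc a * x ^ 8 + x ^ 8 / a ^ 2 = (a + 1 / a ^ 2) * x ^ 8 := by ring
      _ ≤ a ^ 4 * x ^ 8 := hmul
  calc (T.card : ℝ) ≤ K * (N * N) + (N * N / K) * (N * N / K) := htot
    _ ≤ (2:ℝ) ^ ((4:ℝ)/3) * N ^ ((8:ℝ)/3) := hfinal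
end
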